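/- arXiv:2004.11653 — 2 statements merged into one kernel-verified Lean document; each statement's English description precedes it below -/
import Mathlib

section
/- Let R and S be finite posets with h_R = h_S ≤ 1. Then R ⊑_𝓗 S w.r.t. 𝔇' holds if and only if R ⊑_𝓢 S w.r.t. 𝔇' holds, both for 𝔇' = 𝔗_a and for 𝔇' equal to the class 𝔓 of finite posets. -/
/-- A finite digraph: a finite nonempty vertex set `V ⊆ ℕ` together with an
arc set `A ⊆ V × V`. -/
structure Dgraph where
  V : Finset ℕ
  nonempty : V.Nonempty
  A : Finset (ℕ × ℕ)
  A_sub : ∀ p ∈ A, p.1 ∈ V ∧ p.2 ∈ V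

namespace Dgraph

/-- The set of proper arcs of `G`, i.e. the arc set of `G*`. -/
def Astar (G : Dgraph) : Finset (ℕ × ℕ) := G.A.filter (fun p => p.1 ≠ p.2)

/-- `G` is reflexive. -/
def IsRefl (G : Dgraph) : Prop := ∀ v ∈ G.V, (v, v) ∈ G.A

/-- `p` is a path in `G` (a nonempty list of pairwise distinct vertices,
consecutive ones joined by arcs).  Its length as a path is `p.length - 1`. -/
def IsPath (G : Dgraph) (p : List ℕ) : Prop :=
  p ≠ [] ∧ p.Nodup ∧ (∀ v ∈ p, v ∈ G.V) ∧ p.Chain' (fun v w => (v, w) ∈ G.A)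

/-- `p` is a path in `G*`. -/
def IsPathStar (G : Dgraph) (p : List ℕ) : Prop :=
  p ≠ [] ∧ p.Nodup ∧ (∀ v ∈ p, v ∈ G.V) ∧ p.Chain' (fun v w => (v, w) ∈ G.A ∧ v ≠ w)

/-- `G*` contains a closed walk. -/
def HasClosedWalkStar (G : Dgraph) : Prop :=
  ∃ p : List ℕ, (∀ v ∈ p, v ∈ G.V) ∧ p.Chain' (fun v w => (v, w) ∈ G.A ∧ v ≠ w) ∧
    2 ≤ p.length ∧ p.head? = p.getLast?

/-- membership in the class `𝔗ₐ`: `G*` is acyclic. -/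
def MemTa (G : Dgraph) : Prop := ¬ G.HasClosedWalkStar

/-- The height of `G`: the maximal length of a path in `G`. -/
noncomputable def height (G : Dgraph) : ℕ :=
  sSup {n | ∃ p, G.IsPath p ∧ p.length = n + 1}

/-- The interval `[v,w]_G`. -/
def interval (G : Dgraph) (v w : ℕ) : Finset ℕ :=
  G.V.filter (fun z => (v, z) ∈ G.A ∧ (z, w) ∈ G.A)

/-- `ι(v,w)_G`, the cardinality of the interval `[v,w]_G`. -/
def iota (G : Dgraph) (v w : ℕ) : ℕ := (G.interval v w).card

/-- The set `𝓗(G,H)` of homomorphisms from `G` to `H` (represented as total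
maps `ℕ → ℕ`, normalized to `0` outside of `V(G)`). -/
def Hom (G H : Dgraph) : Set (ℕ → ℕ) :=
  {f | (∀ v ∈ G.V, f v ∈ H.V) ∧ (∀ p ∈ G.A, (f p.1, f p.2) ∈ H.A) ∧
    ∀ v, v ∉ G.V → f v = 0}

/-- The set `𝓢(G,H)` of strict homomorphisms from `G` to `H`. -/
def SHom (G H : Dgraph) : Set (ℕ → ℕ) :=
  {f ∈ Hom G H | ∀ p ∈ G.Astar, f p.1 ≠ f p.2}

/-- `μ_ξ(G)`, for a homomorphism `ξ` from `G` into `H`. -/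
def mu (G H : Dgraph) (f : ℕ → ℕ) : ℕ :=
  ∑ p ∈ G.Astar, H.iota (f p.1) (f p.2)

/-- `L` is a subgraph of `G`. -/
def Subgraph (L G : Dgraph) : Prop := L.V ⊆ G.V ∧ L.A ⊆ G.A

/-- Restriction of a map to a vertex set (normalized to `0` outside). -/
def restrict (X : Finset ℕ) (f : ℕ → ℕ) : ℕ → ℕ := fun x => if x ∈ X then f x else 0

/-- `𝓜(L,H)`: homomorphisms from `L` to `H` with maximal `μ`. -/
def MSet (L H : Dgraph) : Set (ℕ → ℕ) :=
  {f ∈ Hom L H | ∀ g ∈ Hom L H, mu L H g ≤ mu L H f}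

/-- `𝓜^𝓛(G,H)`. -/
def MLSet (G H : Dgraph) (𝓛 : Set Dgraph) : Set (ℕ → ℕ) :=
  {f ∈ Hom G H | ∀ L ∈ 𝓛, restrict L.V f ∈ MSet L H}

/-- `𝓙^𝓛_{G,H'}(ξ)` for `ξ ∈ 𝓗(G,H)`. -/
def JSet (G H H' : Dgraph) (𝓛 : Set Dgraph) (ξ : ℕ → ℕ) : Set (ℕ → ℕ) :=
  {ζ ∈ Hom G H' | ∀ L ∈ 𝓛, ∀ p ∈ L.Astar,
    H'.iota (ζ p.1) (ζ p.2) = H.iota (ξ p.1) (ξ p.2)}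

/-- The digraph `P_×` of a path `P = P_0, …, P_ℓ`: vertex set `{P_0,…,P_ℓ}`
and arcs `P_{i-1}P_i`. -/
def pathGraph (P : List ℕ) (h : P ≠ []) : Dgraph where
  V := P.toFinset
  nonempty := by
    obtain ⟨a, t, rfl⟩ := List.exists_cons_of_ne_nil h
    exact ⟨a, by simp⟩
  A := (P.zip P.tail).toFinset
  A_sub := by
    intro p hp
    rw [List.mem_toFinset] at hp
    have h1 := List.of_mem_zip hp
    exact ⟨List.mem_toFinset.mpr h1.1, List.mem_toFinset.mpr (List.mem_of_mem_tail h1.2)⟩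

/-- `𝓛(G)`: the set of the digraphs `P_×` for the paths `P` of length `h_G` in `G`. -/
def LSet (G : Dgraph) : Set Dgraph :=
  {D | ∃ (P : List ℕ) (h : P ≠ []), G.IsPath P ∧ P.length = G.height + 1 ∧
    D = pathGraph P h}

/-- The class `𝕽`: reflexive digraphs `R ∈ 𝔗ₐ` with
`𝓜^{𝓛(R)}(R,R) ∩ 𝓢(R,R) ≠ ∅`. -/
def MemR (R : Dgraph) : Prop :=
  R.MemTa ∧ R.IsRefl ∧ (MLSet R R (LSet R) ∩ SHom R R).Nonempty

/-- `G` is a poset: reflexive, antisymmetric and transitive. -/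
def IsPoset (G : Dgraph) : Prop :=
  G.IsRefl ∧ (∀ v w, (v, w) ∈ G.A → (w, v) ∈ G.A → v = w) ∧
    (∀ u v w, (u, v) ∈ G.A → (v, w) ∈ G.A → (u, w) ∈ G.A)

/-- The class `𝔗ₐ^{=n}`: digraphs in `𝔗ₐ` of height `n` in which every vertex
lies on a path of length `n`. -/
def MemTaEq (n : ℕ) (G : Dgraph) : Prop :=
  G.MemTa ∧ G.height = n ∧ ∀ v ∈ G.V, ∃ p, G.IsPath p ∧ p.length = n + 1 ∧ v ∈ p

/-- A maximal path in `G`: no path in `G` properly contains its vertex set. -/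
def MaximalPath (G : Dgraph) (P : List ℕ) : Prop :=
  G.IsPath P ∧ ∀ Q, G.IsPath Q → (∀ v ∈ P, v ∈ Q) → ∀ v ∈ Q, v ∈ P

end Dgraph

open Dgraph


namespace StmtAux

attribute [local instance] Classical.propDecidable


/-! ### Finiteness of normalized function sets -/

def NormFuns (V W : Finset ℕ) : Set (ℕ → ℕ) :=
  {f | (∀ v ∈ V, f v ∈ W) ∧ ∀ v ∉ V, f v = 0}

lemma normFuns_finite (V W : Finset ℕ) : (NormFuns V W).Finite := by
  classical
  have hsub : NormFuns V W ⊆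
      (fun (σ : ∀ a ∈ V, ℕ) => fun v => if h : v ∈ V then σ v h else 0) ''
      ↑(V.pi fun _ => W) := by
    intro f hf
    refine ⟨fun v _ => f v, ?_, ?_⟩
    · rw [Finset.mem_coe, Finset.mem_pi]
      intro v hv; exact hf.1 v hv
    · funext v; by_cases h : v ∈ V
      · simp [h]
      · simp [h, hf.2 v h]
  exact (Set.Finite.image _ (V.pi fun _ => W).finite_toSet).subset hsub

lemma hom_subset_normFuns (G H : Dgraph) : Hom G H ⊆ NormFuns G.V H.V := by
  intro f hf; exact ⟨hf.1, hf.2.2⟩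

lemma hom_finite (G H : Dgraph) : (Hom G H).Finite :=
  (normFuns_finite G.V H.V).subset (hom_subset_normFuns G H)

lemma shom_finite (G H : Dgraph) : (SHom G H).Finite :=
  (hom_finite G H).subset (fun f hf => hf.1)

/-- The finset of homomorphisms. -/
noncomputable def homFinset (G H : Dgraph) : Finset (ℕ → ℕ) := (hom_finite G H).toFinset

lemma mem_homFinset {G H : Dgraph} {f : ℕ → ℕ} : f ∈ homFinset G H ↔ f ∈ Hom G H := by
  simp [homFinset]

lemma ncard_hom (G H : Dgraph) : (Hom G H).ncard = (homFinset G H).card :=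
  Set.ncard_eq_toFinset_card _ (hom_finite G H)

/-- strictness defect count -/
noncomputable def sCount (G H : Dgraph) (f : ℕ → ℕ) : ℕ :=
  (G.Astar.filter (fun e => f e.1 ≠ f e.2)).card

lemma sCount_le (G H : Dgraph) (f : ℕ → ℕ) : sCount G H f ≤ G.Astar.card :=
  Finset.card_filter_le _ _

lemma shom_iff_sCount {G H : Dgraph} {f : ℕ → ℕ} (hf : f ∈ Hom G H) :
    f ∈ SHom G H ↔ sCount G H f = G.Astar.card := by
  classical
  constructor
  · intro hs
    unfold sCount
    congr 1
    apply Finset.filter_true_of_mem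
    intro e he; exact hs.2 e he
  · intro h
    refine ⟨hf, ?_⟩
    intro e he
    have : G.Astar.filter (fun e => f e.1 ≠ f e.2) = G.Astar :=
      Finset.eq_of_subset_of_card_le (Finset.filter_subset _ _) (le_of_eq h.symm)
    have := this ▸ he
    exact (Finset.mem_filter.mp this).2

lemma ncard_shom (G H : Dgraph) :
    (SHom G H).ncard = ((homFinset G H).filter (fun f => sCount G H f = G.Astar.card)).card := by
  classical
  rw [Set.ncard_eq_toFinset_card _ (shom_finite G H)]
  congr 1
  · ext f
    simp only [Set.Finite.mem_toFinset, Finset.mem_filter, mem_homFinset]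
    constructor
    · intro h; exact ⟨h.1, (shom_iff_sCount h.1).mp h⟩
    · intro h; exact (shom_iff_sCount h.1).mpr h.2



/-! ### Removing consecutive duplicates from a walk -/

def clean : List ℕ → List ℕ
  | [] => []
  | [a] => [a]
  | a :: b :: t => if a = b then clean (a :: t) else a :: clean (b :: t)

lemma clean_nil : clean [] = [] := by simp [clean]
lemma clean_one (a : ℕ) : clean [a] = [a] := by simp [clean]
lemma clean_cc (a b : ℕ) (t : List ℕ) :
    clean (a :: b :: t) = if a = b then clean (a :: t) else a :: clean (b :: t) := by
  rw [clean]

lemma clean_head? (p : List ℕ) : (clean p).head? = p.head? := by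
  induction p using clean.induct with
  | case1 => simp [clean_nil]
  | case2 a => simp [clean_one]
  | case3 b t ih => rw [clean_cc, if_pos rfl, ih]; simp
  | case4 a b t h ih => rw [clean_cc, if_neg h]; rfl

lemma clean_getLast? (p : List ℕ) : (clean p).getLast? = p.getLast? := by
  induction p using clean.induct with
  | case1 => simp [clean_nil]
  | case2 a => simp [clean_one]
  | case3 b t ih =>
    rw [clean_cc, if_pos rfl, ih, List.getLast?_cons_cons]
  | case4 a b t h ih =>
    rw [clean_cc, if_neg h, List.getLast?_cons_cons, ← ih]
    cases hc : clean (b :: t) with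
    | nil =>
      exfalso
      have := clean_head? (b :: t)
      rw [hc] at this
      simp at this
    | cons c t' => rw [List.getLast?_cons_cons]

lemma clean_mem {p : List ℕ} {x : ℕ} (hx : x ∈ clean p) : x ∈ p := by
  induction p using clean.induct with
  | case1 => rw [clean_nil] at hx; exact hx
  | case2 a => rw [clean_one] at hx; exact hx
  | case3 b t ih =>
    rw [clean_cc, if_pos rfl] at hx
    have := ih hx
    simp at this ⊢
    tauto
  | case4 a b t h ih =>
    rw [clean_cc, if_neg h] at hx
    simp at hx
    rcases hx with rfl | hx
    · simp
    · have := ih hx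
      simp at this ⊢
      tauto

lemma clean_chain' {r : ℕ → ℕ → Prop} {p : List ℕ} (hp : p.Chain' r) :
    (clean p).Chain' (fun a b => r a b ∧ a ≠ b) := by
  induction p using clean.induct with
  | case1 => rw [clean_nil]; simp [List.Chain']
  | case2 a => rw [clean_one]; simp [List.Chain']
  | case3 b t ih =>
    rw [clean_cc, if_pos rfl]
    rw [List.Chain', List.isChain_cons_cons] at hp
    exact ih hp.2
  | case4 a b t h ih =>
    rw [clean_cc, if_neg h]
    rw [List.Chain', List.isChain_cons_cons] at hp
    rw [List.Chain', List.isChain_cons]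
    refine ⟨?_, ih hp.2⟩
    intro y hy
    rw [clean_head? (b :: t)] at hy
    simp at hy
    subst hy
    exact ⟨hp.1, h⟩

lemma clean_singleton {p : List ℕ} {a : ℕ} (hp : clean p = [a]) : ∀ x ∈ p, x = a := by
  induction p using clean.induct with
  | case1 => simp
  | case2 c => rw [clean_one] at hp; simp at hp; simp [hp]
  | case3 b t ih =>
    rw [clean_cc, if_pos rfl] at hp
    have := ih hp
    intro x hx
    apply this x
    simp at hx ⊢
    tauto
  | case4 c b t h ih =>
    exfalso
    rw [clean_cc, if_neg h] at hp
    cases hc : clean (b :: t) with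
    | nil =>
      have := clean_head? (b :: t); rw [hc] at this; simp at this
    | cons d t' =>
      rw [hc] at hp
      simp at hp

lemma clean_two_le {p : List ℕ} {x y : ℕ} (hx : x ∈ p) (hy : y ∈ p) (hxy : x ≠ y) :
    2 ≤ (clean p).length := by
  by_contra hlen
  push_neg at hlen
  interval_cases hc : (clean p).length
  · have hnil : clean p = [] := List.length_eq_zero_iff.mp hc
    have h1 := clean_head? p
    rw [hnil] at h1
    cases p with
    | nil => simp at hx
    | cons a t => simp at h1
  · obtain ⟨a, ha⟩ := List.length_eq_one_iff.mp hc
    exact hxy ((clean_singleton ha x hx).trans (clean_singleton ha y hy).symm)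





/-! ### Strict homs into posets, closed walks, reflexive-transitive closure -/

lemma poset_refl_arc {R : Dgraph} (hR : R.IsPoset) {a : ℕ} (ha : a ∈ R.V) : (a, a) ∈ R.A :=
  hR.1 a ha

lemma chain_mem_V {H : Dgraph} {a : ℕ} {l : List ℕ} (hc : List.Chain (fun v w => (v, w) ∈ H.A) a l) :
    ∀ x ∈ l, x ∈ H.V := by
  induction l generalizing a with
  | nil => simp
  | cons b l ih =>
    rw [List.Chain, List.isChain_cons_cons] at hc
    intro x hx
    rcases List.mem_cons.mp hx with rfl | hx
    · exact (H.A_sub _ hc.1).2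
    · exact ih hc.2 x hx

/-- f maps the ends of a walk to an arc of a poset. -/
lemma walk_arc {H R : Dgraph} (hR : R.IsPoset) {f : ℕ → ℕ} (hf : f ∈ Hom H R)
    {a : ℕ} {l : List ℕ} (hc : List.Chain (fun v w => (v, w) ∈ H.A) a l) (ha : a ∈ H.V) :
    (f a, f (List.getLast (a :: l) (List.cons_ne_nil _ _))) ∈ R.A := by
  induction l generalizing a with
  | nil => exact poset_refl_arc hR (hf.1 a ha)
  | cons b l ih =>
    rw [List.Chain, List.isChain_cons_cons] at hc
    have h1 : (f a, f b) ∈ R.A := hf.2.1 _ hc.1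
    have h2 := ih hc.2 (H.A_sub _ hc.1).2
    rw [List.getLast_cons_cons]
    exact hR.2.2 _ _ _ h1 (by exact h2)

lemma shom_empty_of_not_memTa {H R : Dgraph} (hR : R.IsPoset) (h : ¬ H.MemTa) :
    SHom H R = ∅ := by
  rw [MemTa, not_not] at h
  obtain ⟨p, hV, hchain, hlen, hcl⟩ := h
  ext f
  simp only [Set.mem_empty_iff_false, iff_false]
  intro hf
  cases p with
  | nil => simp at hlen
  | cons p0 q =>
  cases q with
  | nil => simp at hlen
  | cons p1 rest =>
  rw [List.Chain', List.isChain_cons_cons] at hchain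
  obtain ⟨⟨harc, hne⟩, hchain2⟩ := hchain
  have hlast : List.getLast (p0 :: p1 :: rest) (List.cons_ne_nil _ _) = p0 := by
    have h2 : (p0 :: p1 :: rest).getLast? = some p0 := by rw [← hcl]; rfl
    rwa [List.getLast?_eq_getLast (List.cons_ne_nil _ _), Option.some_inj] at h2
  have hchainP : List.Chain (fun v w => (v, w) ∈ H.A) p1 rest :=
    List.Chain.imp (fun a b hab => hab.1)
      (show List.Chain _ p1 rest from hchain2)
  have h1 := walk_arc hR hf.1 hchainP (hV p1 (by simp))
  rw [show List.getLast (p1 :: rest) (List.cons_ne_nil _ _) = p0 from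
    (List.getLast_cons_cons (a := p0) (b := p1) (l := rest) ▸ hlast)] at h1
  have h0 : (f p0, f p1) ∈ R.A := hf.1.2.1 _ harc
  have : f p0 = f p1 := hR.2.1 _ _ h0 h1
  exact hf.2 (p0, p1) (Finset.mem_filter.mpr ⟨harc, hne⟩) this

/-! ### Reflexive-transitive closure of a digraph -/

noncomputable def rcl (H : Dgraph) : Dgraph where
  V := H.V
  nonempty := H.nonempty
  A := (H.V ×ˢ H.V).filter
    (fun p => Relation.ReflTransGen (fun a b => (a, b) ∈ H.A) p.1 p.2)
  A_sub := by
    intro p hp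
    have := Finset.mem_product.mp (Finset.mem_filter.mp hp).1
    exact this

lemma mem_rcl_A {H : Dgraph} {u v : ℕ} :
    (u, v) ∈ (rcl H).A ↔ u ∈ H.V ∧ v ∈ H.V ∧
      Relation.ReflTransGen (fun a b => (a, b) ∈ H.A) u v := by
  simp [rcl, Finset.mem_filter, Finset.mem_product, and_assoc]

lemma arc_mem_rcl {H : Dgraph} {u v : ℕ} (h : (u, v) ∈ H.A) : (u, v) ∈ (rcl H).A :=
  mem_rcl_A.mpr ⟨(H.A_sub _ h).1, (H.A_sub _ h).2, Relation.ReflTransGen.single h⟩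

/-- from a two-way reachability with distinct endpoints, a closed star walk -/
lemma closedWalk_of_rtg {H : Dgraph} {u v : ℕ} (hu : u ∈ H.V) (hne : u ≠ v)
    (h1 : Relation.ReflTransGen (fun a b => (a, b) ∈ H.A) u v)
    (h2 : Relation.ReflTransGen (fun a b => (a, b) ∈ H.A) v u) :
    H.HasClosedWalkStar := by
  obtain ⟨l1, hc1, hl1⟩ := List.exists_isChain_cons_of_relationReflTransGen h1
  obtain ⟨l2, hc2, hl2⟩ := List.exists_isChain_cons_of_relationReflTransGen h2
  cases l2 with
  | nil => exact absurd (by simpa using hl2) (Ne.symm hne)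
  | cons c l2' =>
  set p : List ℕ := (u :: l1) ++ (c :: l2') with hp
  have hchain : p.Chain' (fun a b => (a, b) ∈ H.A) := by
    rw [hp, List.Chain', List.isChain_append]
    refine ⟨hc1, (List.chain_cons.mp hc2).2, ?_⟩
    intro x hx y hy
    rw [List.getLast?_eq_getLast (List.cons_ne_nil _ _)] at hx
    simp only [Option.mem_def, Option.some_inj, List.head?_cons] at hx hy
    subst hx; subst hy
    rw [hl1]
    exact (List.chain_cons.mp hc2).1
  have hmem : ∀ x ∈ p, x ∈ H.V := by
    intro x hx
    rw [hp] at hx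
    rcases List.mem_append.mp hx with hx | hx
    · rcases List.mem_cons.mp hx with rfl | hx
      · exact hu
      · exact chain_mem_V hc1 x hx
    · exact chain_mem_V hc2 x hx
  have hhead : p.head? = some u := by rw [hp]; rfl
  have hlastp : p.getLast? = some u := by
    rw [hp, List.getLast?_append, List.getLast?_eq_getLast (List.cons_ne_nil _ _)]
    rw [show List.getLast (c :: l2') (List.cons_ne_nil _ _)
      = List.getLast (v :: c :: l2') (List.cons_ne_nil _ _) from (List.getLast_cons_cons).symm]
    rw [hl2]
    rfl
  have hv_mem : v ∈ p := by
    rw [hp]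
    have hv1 : v ∈ u :: l1 := hl1 ▸ List.getLast_mem (List.cons_ne_nil u l1)
    exact List.mem_append.mpr (Or.inl hv1)
  refine ⟨clean p, ?_, clean_chain' hchain, ?_, ?_⟩
  · intro x hx; exact hmem x (clean_mem hx)
  · have hu_mem : u ∈ p := by
      rw [hp]; exact List.mem_append.mpr (Or.inl (List.mem_cons_self (a := u) (l := l1)))
    exact clean_two_le hu_mem hv_mem hne
  · rw [clean_head?, clean_getLast?, hhead, hlastp]

lemma rcl_poset {H : Dgraph} (hTa : H.MemTa) : (rcl H).IsPoset := by
  refine ⟨?_, ?_, ?_⟩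
  · intro v hv
    exact mem_rcl_A.mpr ⟨hv, hv, Relation.ReflTransGen.refl⟩
  · intro v w h1 h2
    by_contra hne
    rw [mem_rcl_A] at h1 h2
    exact hTa (closedWalk_of_rtg h1.1 hne h1.2.2 h2.2.2)
  · intro a b c h1 h2
    rw [mem_rcl_A] at h1 h2 ⊢
    exact ⟨h1.1, h2.2.1, h1.2.2.trans h2.2.2⟩

/-- first proper step of a reachability -/
lemma rtg_first_step {r : ℕ → ℕ → Prop} {u v : ℕ} (h : Relation.ReflTransGen r u v)
    (hne : u ≠ v) : ∃ w, r u w ∧ u ≠ w ∧ Relation.ReflTransGen r w v := by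
  induction h using Relation.ReflTransGen.head_induction_on with
  | refl => exact absurd rfl hne
  | head hab hbv ih =>
    rename_i a b
    by_cases hab' : a = b
    · subst hab'
      exact ih hne
    · exact ⟨b, hab, hab', hbv⟩

lemma shom_rcl {H R : Dgraph} (hR : R.IsPoset) : SHom H R = SHom (rcl H) R := by
  ext f
  constructor
  · rintro ⟨⟨hV, hA, hz⟩, hs⟩
    have hA' : ∀ p ∈ (rcl H).A, (f p.1, f p.2) ∈ R.A := by
      rintro ⟨u, v⟩ hp
      rw [mem_rcl_A] at hp
      obtain ⟨hu, hv, hrtg⟩ := hp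
      clear hv
      induction hrtg using Relation.ReflTransGen.head_induction_on with
      | refl => exact poset_refl_arc hR (hV _ hu)
      | head hab hbv ih =>
        rename_i a b
        exact hR.2.2 (f a) (f b) (f v) (hA (a, b) hab) (ih (H.A_sub (a, b) hab).2)
    refine ⟨⟨hV, hA', hz⟩, ?_⟩
    rintro ⟨u, v⟩ hp hfeq
    rw [Astar, Finset.mem_filter, mem_rcl_A] at hp
    obtain ⟨⟨hu, hv, hrtg⟩, hne⟩ := hp
    obtain ⟨w, huw, hnuw, hwv⟩ := rtg_first_step hrtg hne
    have h1 : (f u, f w) ∈ R.A := hA _ huw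
    have hfuw : f u ≠ f w := hs (u, w) (Finset.mem_filter.mpr ⟨huw, hnuw⟩)
    have h2 : (f w, f v) ∈ R.A := hA' (w, v) (mem_rcl_A.mpr ⟨(H.A_sub _ huw).2, hv, hwv⟩)
    rw [← hfeq] at h2
    exact hfuw (hR.2.1 _ _ h1 h2)
  · rintro ⟨⟨hV, hA, hz⟩, hs⟩
    refine ⟨⟨hV, ?_, hz⟩, ?_⟩
    · intro p hp
      exact hA p (by rcases p with ⟨u, v⟩; exact arc_mem_rcl hp)
    · rintro ⟨u, v⟩ hp
      rw [Astar, Finset.mem_filter] at hp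
      exact hs (u, v) (Finset.mem_filter.mpr ⟨arc_mem_rcl hp.1, hp.2⟩)


/-! ### Kernel maps and the quotient decomposition -/

/-- relation generated by arcs collapsed by `c` -/
def krel (G : Dgraph) (c : ℕ → ℕ) (u w : ℕ) : Prop := (u, w) ∈ G.A ∧ c u = c w

/-- the class of `v` inside `V(G)` -/
noncomputable def kclass (G : Dgraph) (c : ℕ → ℕ) (v : ℕ) : Finset ℕ :=
  G.V.filter (fun w => Relation.EqvGen (krel G c) v w)

lemma self_mem_kclass {G : Dgraph} {c : ℕ → ℕ} {v : ℕ} (hv : v ∈ G.V) :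
    v ∈ kclass G c v :=
  Finset.mem_filter.mpr ⟨hv, Relation.EqvGen.refl v⟩

/-- the canonical kernel map associated with a colouring `c` -/
noncomputable def kermap (G : Dgraph) (c : ℕ → ℕ) (v : ℕ) : ℕ :=
  if hv : v ∈ G.V then (kclass G c v).min' ⟨v, self_mem_kclass hv⟩ else 0

lemma eqvGen_mem_V {G : Dgraph} {c : ℕ → ℕ} {u w : ℕ} (h : Relation.EqvGen (krel G c) u w) :
    u = w ∨ (u ∈ G.V ∧ w ∈ G.V) := by
  induction h with
  | rel a b hab => exact Or.inr ⟨(G.A_sub _ hab.1).1, (G.A_sub _ hab.1).2⟩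
  | refl a => exact Or.inl rfl
  | symm a b h ih => tauto
  | trans a b c h1 h2 ih1 ih2 =>
    rcases ih1 with rfl | ih1
    · exact ih2
    · rcases ih2 with rfl | ih2
      · exact Or.inr ih1
      · exact Or.inr ⟨ih1.1, ih2.2⟩

lemma kclass_eq_of_eqvGen {G : Dgraph} {c : ℕ → ℕ} {u w : ℕ}
    (h : Relation.EqvGen (krel G c) u w) : kclass G c u = kclass G c w := by
  ext x
  simp only [kclass, Finset.mem_filter, and_congr_right_iff]
  intro _
  exact ⟨fun hx => Relation.EqvGen.trans _ _ _ (Relation.EqvGen.symm _ _ h) hx,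
    fun hx => Relation.EqvGen.trans _ _ _ h hx⟩

lemma kermap_eq_of_eqvGen {G : Dgraph} {c : ℕ → ℕ} {u w : ℕ}
    (hu : u ∈ G.V) (hw : w ∈ G.V) (h : Relation.EqvGen (krel G c) u w) :
    kermap G c u = kermap G c w := by
  rw [kermap, kermap, dif_pos hu, dif_pos hw]
  congr 1
  exact kclass_eq_of_eqvGen h

lemma kermap_mem {G : Dgraph} {c : ℕ → ℕ} {v : ℕ} (hv : v ∈ G.V) :
    kermap G c v ∈ G.V ∧ Relation.EqvGen (krel G c) v (kermap G c v) := by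
  rw [kermap, dif_pos hv]
  have h1 := Finset.min'_mem (kclass G c v) ⟨v, self_mem_kclass hv⟩
  unfold kclass at h1
  rw [Finset.mem_filter] at h1
  exact h1

lemma kermap_zero {G : Dgraph} {c : ℕ → ℕ} {v : ℕ} (hv : v ∉ G.V) : kermap G c v = 0 := by
  rw [kermap, dif_neg hv]

lemma const_of_eqvGen {G : Dgraph} {c : ℕ → ℕ} {u w : ℕ} (h : Relation.EqvGen (krel G c) u w) :
    c u = c w := by
  induction h with
  | rel a b hab => exact hab.2
  | refl a => rfl
  | symm a b h ih => exact ih.symm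
  | trans a b d h1 h2 ih1 ih2 => exact ih1.trans ih2

lemma kermap_idem {G : Dgraph} {c : ℕ → ℕ} {v : ℕ} (hv : v ∈ G.V) :
    kermap G c (kermap G c v) = kermap G c v := by
  obtain ⟨h1, h2⟩ := kermap_mem (c := c) hv
  exact (kermap_eq_of_eqvGen hv h1 h2).symm

/-- if two colourings generate the same collapsing relation pointwise, kernel maps agree -/
lemma eqvGen_mono' {r s : ℕ → ℕ → Prop} (h : ∀ a b, r a b → Relation.EqvGen s a b) :
    ∀ {u w}, Relation.EqvGen r u w → Relation.EqvGen s u w := by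
  intro u w huw
  induction huw with
  | rel a b hab => exact h a b hab
  | refl a => exact Relation.EqvGen.refl a
  | symm a b hab ih => exact Relation.EqvGen.symm _ _ ih
  | trans a b d h1 h2 ih1 ih2 => exact Relation.EqvGen.trans _ _ _ ih1 ih2

lemma kermap_congr {G : Dgraph} {c c' : ℕ → ℕ}
    (h : ∀ u w, Relation.EqvGen (krel G c) u w ↔ Relation.EqvGen (krel G c') u w) :
    kermap G c = kermap G c' := by
  funext v
  by_cases hv : v ∈ G.V
  · rw [kermap, kermap, dif_pos hv, dif_pos hv]
    congr 1
    ext x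
    simp only [kclass, Finset.mem_filter, and_congr_right_iff]
    intro _; exact h v x
  · rw [kermap_zero hv, kermap_zero hv]

/-- the set of possible kernel maps for `G` -/
def KerSet (G : Dgraph) : Set (ℕ → ℕ) := {q | ∃ c : ℕ → ℕ, q = kermap G c}

lemma kerSet_finite (G : Dgraph) : (KerSet G).Finite := by
  apply (normFuns_finite G.V G.V).subset
  rintro q ⟨c, rfl⟩
  exact ⟨fun v hv => (kermap_mem hv).1, fun v hv => kermap_zero hv⟩

noncomputable def kerFinset (G : Dgraph) : Finset (ℕ → ℕ) := (kerSet_finite G).toFinset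

/-- quotient digraph along a map -/
noncomputable def quotG (G : Dgraph) (q : ℕ → ℕ) : Dgraph where
  V := G.V.image q
  nonempty := G.nonempty.image q
  A := G.A.image (fun p => (q p.1, q p.2))
  A_sub := by
    intro p hp
    rw [Finset.mem_image] at hp
    obtain ⟨e, he, rfl⟩ := hp
    exact ⟨Finset.mem_image_of_mem q (G.A_sub _ he).1,
      Finset.mem_image_of_mem q (G.A_sub _ he).2⟩

noncomputable def shomFinset (G H : Dgraph) : Finset (ℕ → ℕ) := (shom_finite G H).toFinset

lemma mem_shomFinset {G H : Dgraph} {f : ℕ → ℕ} : f ∈ shomFinset G H ↔ f ∈ SHom G H := by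
  simp [shomFinset]

lemma ncard_shom' (G H : Dgraph) : (SHom G H).ncard = (shomFinset G H).card :=
  Set.ncard_eq_toFinset_card _ (shom_finite G H)

lemma hom_const {G R : Dgraph} {ξ : ℕ → ℕ} (hξ : ξ ∈ Hom G R) {u w : ℕ}
    (h : Relation.EqvGen (krel G ξ) u w) : ξ u = ξ w := const_of_eqvGen h

/-- main decomposition: homs are counted by strict homs of the quotients -/
lemma hom_decomp (G R : Dgraph) :
    (Hom G R).ncard = ∑ q ∈ kerFinset G, (SHom (quotG G q) R).ncard := by
  classical
  rw [ncard_hom]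
  rw [Finset.card_eq_sum_card_fiberwise (f := fun ξ => kermap G ξ) (t := kerFinset G)
    (fun ξ _ => by simp only [Finset.mem_coe, kerFinset, Set.Finite.mem_toFinset]; exact ⟨ξ, rfl⟩)]
  apply Finset.sum_congr rfl
  intro q hq
  rw [kerFinset, Set.Finite.mem_toFinset] at hq
  obtain ⟨c, rfl⟩ := hq
  set q := kermap G c with hqdef
  have hqV : ∀ v ∈ G.V, q v ∈ G.V := fun v hv => (kermap_mem hv).1
  have hqq : ∀ v ∈ G.V, q (q v) = q v := fun v hv => kermap_idem hv
  rw [ncard_shom']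
  apply Finset.card_bij' (i := fun ξ _ => restrict (quotG G q).V ξ)
    (j := fun ζ _ => fun v => if v ∈ G.V then ζ (q v) else 0)
  · -- forward map lands in shomFinset
    intro ξ hξ
    rw [Finset.mem_filter, mem_homFinset] at hξ
    obtain ⟨hξhom, hker⟩ := hξ
    have hconst : ∀ v ∈ G.V, ξ (q v) = ξ v := by
      intro v hv
      exact (hom_const hξhom (hker ▸ (kermap_mem (c := ξ) hv).2)).symm
    rw [mem_shomFinset]
    have hres : ∀ x ∈ (quotG G q).V, restrict (quotG G q).V ξ x = ξ x := by
      intro x hx; rw [restrict, if_pos hx]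
    refine ⟨⟨?_, ?_, ?_⟩, ?_⟩
    · intro x hx
      rw [hres x hx]
      obtain ⟨v, hv, rfl⟩ := Finset.mem_image.mp hx
      exact hξhom.1 _ (hqV v hv)
    · rintro ⟨a, b⟩ hp
      obtain ⟨⟨u, v⟩, he, heq⟩ := Finset.mem_image.mp hp
      have h1 : a = q u ∧ b = q v := by
        constructor
        · exact (congrArg Prod.fst heq).symm
        · exact (congrArg Prod.snd heq).symm
      obtain ⟨rfl, rfl⟩ := h1
      have hu := (G.A_sub _ he).1
      have hv := (G.A_sub _ he).2
      rw [hres _ (Finset.mem_image_of_mem q hu), hres _ (Finset.mem_image_of_mem q hv),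
        hconst u hu, hconst v hv]
      exact hξhom.2.1 _ he
    · intro v hv; rw [restrict, if_neg hv]
    · rintro ⟨a, b⟩ hp hfeq
      rw [Astar, Finset.mem_filter] at hp
      obtain ⟨hp1, hne⟩ := hp
      obtain ⟨⟨u, v⟩, he, heq⟩ := Finset.mem_image.mp hp1
      have h1 : a = q u ∧ b = q v := by
        constructor
        · exact (congrArg Prod.fst heq).symm
        · exact (congrArg Prod.snd heq).symm
      obtain ⟨rfl, rfl⟩ := h1
      have hu := (G.A_sub _ he).1
      have hv := (G.A_sub _ he).2
      simp only at hfeq hne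
      rw [hres _ (Finset.mem_image_of_mem q hu), hres _ (Finset.mem_image_of_mem q hv),
        hconst u hu, hconst v hv] at hfeq
      -- ξ u = ξ v collapses the arc, so q u = q v, contradiction
      have : Relation.EqvGen (krel G ξ) u v := Relation.EqvGen.rel _ _ ⟨he, hfeq⟩
      exact hne (hker ▸ kermap_eq_of_eqvGen hu hv this)
  · -- backward map lands in the fiber
    intro ζ hζ
    rw [mem_shomFinset] at hζ
    set ξ' : ℕ → ℕ := fun v => if v ∈ G.V then ζ (q v) else 0 with hξ'
    have hξ'V : ∀ v ∈ G.V, ξ' v = ζ (q v) := by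
      intro v hv
      show (if v ∈ G.V then ζ (q v) else 0) = ζ (q v)
      rw [if_pos hv]
    have hξ'z : ∀ v ∉ G.V, ξ' v = 0 := by
      intro v hv
      show (if v ∈ G.V then ζ (q v) else 0) = 0
      rw [if_neg hv]
    have hξ'hom : ξ' ∈ Hom G R := by
      refine ⟨?_, ?_, ?_⟩
      · intro v hv
        rw [hξ'V v hv]
        exact hζ.1.1 _ (Finset.mem_image_of_mem q hv)
      · rintro ⟨u, v⟩ he
        rw [hξ'V _ (G.A_sub _ he).1, hξ'V _ (G.A_sub _ he).2]
        exact hζ.1.2.1 (q u, q v) (Finset.mem_image.mpr ⟨(u, v), he, rfl⟩)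
      · exact hξ'z
    rw [Finset.mem_filter, mem_homFinset]
    refine ⟨hξ'hom, ?_⟩
    have hiff : ∀ u w, Relation.EqvGen (krel G ξ') u w ↔ Relation.EqvGen (krel G c) u w := by
      intro u w
      constructor
      · apply eqvGen_mono'
        intro a b hab
        obtain ⟨he, hval⟩ := hab
        have ha := (G.A_sub _ he).1
        have hb := (G.A_sub _ he).2
        rw [hξ'V a ha, hξ'V b hb] at hval
        have hqab : q a = q b := by
          by_contra hqne
          exact hζ.2 (q a, q b)
            (Finset.mem_filter.mpr ⟨Finset.mem_image.mpr ⟨(a, b), he, rfl⟩, hqne⟩) hval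
        have h3 := (kermap_mem (c := c) hb).2
        rw [← hqdef, ← hqab] at h3
        exact Relation.EqvGen.trans _ _ _ (kermap_mem (c := c) ha).2
          (Relation.EqvGen.symm _ _ h3)
      · apply eqvGen_mono'
        intro a b hab
        obtain ⟨he, hval⟩ := hab
        have ha := (G.A_sub _ he).1
        have hb := (G.A_sub _ he).2
        have hqab : q a = q b :=
          kermap_eq_of_eqvGen ha hb (Relation.EqvGen.rel _ _ ⟨he, hval⟩)
        refine Relation.EqvGen.rel _ _ ⟨he, ?_⟩
        rw [hξ'V a ha, hξ'V b hb, hqab]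
    rw [show kermap G ξ' = kermap G c from kermap_congr hiff]
  · -- j ∘ i = id
    intro ξ hξ
    rw [Finset.mem_filter, mem_homFinset] at hξ
    obtain ⟨hξhom, hker⟩ := hξ
    have hconst : ∀ v ∈ G.V, ξ (q v) = ξ v := by
      intro v hv
      exact (hom_const hξhom (hker ▸ (kermap_mem (c := ξ) hv).2)).symm
    funext v
    by_cases hv : v ∈ G.V
    · simp only [if_pos hv]
      rw [restrict, if_pos (show q v ∈ (quotG G q).V from Finset.mem_image_of_mem q hv)]
      exact hconst v hv
    · simp only [if_neg hv]
      exact (hξhom.2.2 v hv).symm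
  · -- i ∘ j = id
    intro ζ hζ
    rw [mem_shomFinset] at hζ
    funext x
    by_cases hx : x ∈ (quotG G q).V
    · rw [restrict, if_pos hx]
      obtain ⟨v, hv, rfl⟩ := Finset.mem_image.mp hx
      rw [if_pos (hqV v hv), hqq v hv]
    · rw [restrict, if_neg hx]
      exact (hζ.1.2.2 x hx).symm

/-- easy direction, `𝔗ₐ` class -/
lemma shom_imp_hom_ta {R S : Dgraph} (hR : R.IsPoset) (hS : S.IsPoset)
    (h : ∀ G : Dgraph, G.MemTa → (SHom G R).ncard ≤ (SHom G S).ncard) (G : Dgraph) :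
    (Hom G R).ncard ≤ (Hom G S).ncard := by
  rw [hom_decomp G R, hom_decomp G S]
  apply Finset.sum_le_sum
  intro q hq
  by_cases hTa : (quotG G q).MemTa
  · exact h _ hTa
  · rw [shom_empty_of_not_memTa hR hTa, shom_empty_of_not_memTa hS hTa]

/-- easy direction, poset class -/
lemma shom_imp_hom_poset {R S : Dgraph} (hR : R.IsPoset) (hS : S.IsPoset)
    (h : ∀ G : Dgraph, G.IsPoset → (SHom G R).ncard ≤ (SHom G S).ncard) (G : Dgraph) :
    (Hom G R).ncard ≤ (Hom G S).ncard := by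
  rw [hom_decomp G R, hom_decomp G S]
  apply Finset.sum_le_sum
  intro q hq
  by_cases hTa : (quotG G q).MemTa
  · rw [shom_rcl hR, shom_rcl hS]
    exact h _ (rcl_poset hTa)
  · rw [shom_empty_of_not_memTa hR hTa, shom_empty_of_not_memTa hS hTa]

/-! ### Intervals in posets of height at most 1 -/

lemma path_length_le {G : Dgraph} {p : List ℕ} (hp : G.IsPath p) : p.length ≤ G.V.card := by
  obtain ⟨-, hnd, hmem, -⟩ := hp
  calc p.length = p.toFinset.card := (List.toFinset_card_of_nodup hnd).symm
  _ ≤ G.V.card := Finset.card_le_card (fun x hx => hmem x (List.mem_toFinset.mp hx))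

lemma height_ge {G : Dgraph} {p : List ℕ} (hp : G.IsPath p) {n : ℕ} (hn : p.length = n + 1) :
    n ≤ G.height := by
  apply le_csSup
  · refine ⟨G.V.card, ?_⟩
    rintro x ⟨p', hp', hl⟩
    have := path_length_le hp'
    omega
  · exact ⟨p, hp, hn⟩

lemma iota_classify {R : Dgraph} (hR : R.IsPoset) (hle : R.height ≤ 1) {a b : ℕ}
    (ha : a ∈ R.V) (harc : (a, b) ∈ R.A) :
    R.iota a b = if a = b then 1 else 2 := by
  have hb : b ∈ R.V := (R.A_sub _ harc).2
  by_cases hab : a = b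
  · subst hab
    rw [if_pos rfl]
    have : R.interval a a = {a} := by
      ext z
      simp only [interval, Finset.mem_filter, Finset.mem_singleton]
      constructor
      · rintro ⟨hz, h1, h2⟩; exact (hR.2.1 a z h1 h2).symm
      · rintro rfl; exact ⟨ha, hR.1 _ ha, hR.1 _ ha⟩
    rw [Dgraph.iota, this, Finset.card_singleton]
  · rw [if_neg hab]
    have : R.interval a b = {a, b} := by
      ext z
      simp only [interval, Finset.mem_filter, Finset.mem_insert, Finset.mem_singleton]
      constructor
      · rintro ⟨hz, h1, h2⟩
        by_contra hcon
        push_neg at hcon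
        obtain ⟨hza, hzb⟩ := hcon
        have hpath : R.IsPath [a, z, b] := by
          refine ⟨by simp, by simp [Ne.symm hza, hzb, hab], ?_, ?_⟩
          · intro v hv
            simp at hv
            rcases hv with rfl | rfl | rfl <;> assumption
          · simp [List.Chain', List.isChain_cons_cons, h1, h2]
        have h4 := height_ge (n := 2) hpath (by simp)
        omega
      · rintro (rfl | rfl)
        · exact ⟨ha, hR.1 _ ha, harc⟩
        · exact ⟨hb, harc, hR.1 _ hb⟩
    rw [Dgraph.iota, this, Finset.card_pair hab]

/-! ### Counting extensions over free vertices -/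

lemma card_ext (Z : Finset ℕ) (T : ℕ → Finset ℕ) (ξ : ℕ → ℕ) :
    {f : ℕ → ℕ | (∀ z ∈ Z, f z ∈ T z) ∧ ∀ v ∉ Z, f v = ξ v}.ncard = ∏ z ∈ Z, (T z).card := by
  classical
  have himg : {f : ℕ → ℕ | (∀ z ∈ Z, f z ∈ T z) ∧ ∀ v ∉ Z, f v = ξ v} =
      (fun (σ : ∀ a ∈ Z, ℕ) => fun v => if h : v ∈ Z then σ v h else ξ v) ''
        ↑(Z.pi (fun z => T z)) := by
    ext f
    constructor
    · intro hf
      refine ⟨fun v _ => f v, ?_, ?_⟩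
      · rw [Finset.mem_coe, Finset.mem_pi]
        exact fun a ha => hf.1 a ha
      · funext v
        by_cases h : v ∈ Z
        · simp [h]
        · simp [h, hf.2 v h]
    · rintro ⟨σ, hσ, rfl⟩
      rw [Finset.mem_coe, Finset.mem_pi] at hσ
      constructor
      · intro z hz; simp only [dif_pos hz]; exact hσ z hz
      · intro v hv; simp only [dif_neg hv]
  rw [himg, Set.ncard_image_of_injOn, Set.ncard_coe_finset, Finset.card_pi]
  intro σ1 h1 σ2 h2 heq
  funext v hv
  have h3 := congrFun heq v
  simpa only [dif_pos hv] using h3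

/-! ### Extracting top coefficients from exponential sums -/

lemma extract_top {α β : Type} (F : Finset α) (Gf : Finset β) (sR : α → ℕ) (sS : β → ℕ)
    (m : ℕ) (hm : 1 ≤ m) (hFR : ∀ a ∈ F, sR a ≤ m) (hGS : ∀ b ∈ Gf, sS b ≤ m)
    (h : ∀ k, ∑ a ∈ F, 2 ^ (k * sR a) ≤ ∑ b ∈ Gf, 2 ^ (k * sS b)) :
    (F.filter (fun a => sR a = m)).card ≤ (Gf.filter (fun b => sS b = m)).card := by
  classical
  by_contra hcon
  push_neg at hcon
  set k := Gf.card + 1 with hk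
  have hL : (F.filter (fun a => sR a = m)).card * 2 ^ (k * m) ≤ ∑ a ∈ F, 2 ^ (k * sR a) := by
    calc (F.filter (fun a => sR a = m)).card * 2 ^ (k * m)
        = ∑ a ∈ F.filter (fun a => sR a = m), 2 ^ (k * sR a) := by
          rw [Finset.sum_congr rfl (fun a ha => by
            rw [(Finset.mem_filter.mp ha).2]), Finset.sum_const, smul_eq_mul]
      _ ≤ _ := Finset.sum_le_sum_of_subset (Finset.filter_subset _ _)
  have hRb : ∑ b ∈ Gf, 2 ^ (k * sS b) <
      ((Gf.filter (fun b => sS b = m)).card + 1) * 2 ^ (k * m) := by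
    rw [← Finset.sum_filter_add_sum_filter_not Gf (fun b => sS b = m)]
    have h1 : ∑ b ∈ Gf.filter (fun b => sS b = m), 2 ^ (k * sS b) =
        (Gf.filter (fun b => sS b = m)).card * 2 ^ (k * m) := by
      rw [Finset.sum_congr rfl (fun b hb => by
        rw [(Finset.mem_filter.mp hb).2]), Finset.sum_const, smul_eq_mul]
    have h2 : ∑ b ∈ Gf.filter (fun b => ¬ sS b = m), 2 ^ (k * sS b) < 2 ^ (k * m) := by
      have hterm : ∀ b ∈ Gf.filter (fun b => ¬ sS b = m), 2 ^ (k * sS b) ≤ 2 ^ (k * (m - 1)) := by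
        intro b hb
        rw [Finset.mem_filter] at hb
        have := hGS b hb.1
        have hlt : sS b ≤ m - 1 := by omega
        exact Nat.pow_le_pow_right (by norm_num) (Nat.mul_le_mul_left k hlt)
      calc ∑ b ∈ Gf.filter (fun b => ¬ sS b = m), 2 ^ (k * sS b)
          ≤ ∑ _b ∈ Gf.filter (fun b => ¬ sS b = m), 2 ^ (k * (m - 1)) :=
            Finset.sum_le_sum hterm
        _ = (Gf.filter (fun b => ¬ sS b = m)).card * 2 ^ (k * (m - 1)) := by
            rw [Finset.sum_const, smul_eq_mul]
        _ ≤ Gf.card * 2 ^ (k * (m - 1)) :=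
            Nat.mul_le_mul_right _ (Finset.card_le_card (Finset.filter_subset _ _))
        _ < 2 ^ k * 2 ^ (k * (m - 1)) := by
            have h2k : Gf.card < 2 ^ k :=
              lt_of_lt_of_le Nat.lt_two_pow_self (Nat.pow_le_pow_right (by norm_num) (by omega))
            have hpos : 0 < 2 ^ (k * (m - 1)) := Nat.pow_pos (by norm_num)
            exact (Nat.mul_lt_mul_right hpos).mpr h2k
        _ = 2 ^ (k * m) := by
            rw [← pow_add]
            congr 1
            have : m - 1 + 1 = m := by omega
            calc k + k * (m - 1) = k * ((m - 1) + 1) := by ring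
              _ = k * m := by rw [this]
    rw [h1]
    calc (Gf.filter (fun b => sS b = m)).card * 2 ^ (k * m)
        + ∑ b ∈ Gf.filter (fun b => ¬ sS b = m), 2 ^ (k * sS b)
        < (Gf.filter (fun b => sS b = m)).card * 2 ^ (k * m) + 2 ^ (k * m) :=
          Nat.add_lt_add_left h2 _
      _ = ((Gf.filter (fun b => sS b = m)).card + 1) * 2 ^ (k * m) := by ring
  have hF := h k
  have hthis : ((Gf.filter (fun b => sS b = m)).card + 1) * 2 ^ (k * m) ≤
      (F.filter (fun a => sR a = m)).card * 2 ^ (k * m) :=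
    Nat.mul_le_mul_right _ (by omega)
  have hfinal := lt_of_le_of_lt (hL.trans hF) hRb
  exact absurd hfinal (not_lt.mpr hthis)

lemma shom_eq_hom_of_astar_empty {G R : Dgraph} (h : G.Astar = ∅) : SHom G R = Hom G R := by
  ext f
  simp only [SHom, Set.mem_setOf_eq, h]
  simp

/-! ### The gadget construction -/

/-- base offset for fresh vertices -/
noncomputable def off (G : Dgraph) : ℕ := G.V.max' G.nonempty + 1

noncomputable def fresh (G : Dgraph) (e : ℕ × ℕ) (i : ℕ) : ℕ :=
  off G + Nat.pair (Nat.pair e.1 e.2) i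

lemma fresh_not_mem {G : Dgraph} {e : ℕ × ℕ} {i : ℕ} : fresh G e i ∉ G.V := by
  intro h
  have h1 := G.V.le_max' _ h
  have : off G ≤ fresh G e i := Nat.le_add_right _ _
  unfold off at *
  omega

lemma fresh_inj {G : Dgraph} {e e' : ℕ × ℕ} {i i' : ℕ}
    (h : fresh G e i = fresh G e' i') : e = e' ∧ i = i' := by
  unfold fresh at h
  have h2 : Nat.pair (Nat.pair e.1 e.2) i = Nat.pair (Nat.pair e'.1 e'.2) i' := by omega
  rw [Nat.pair_eq_pair] at h2
  obtain ⟨h3, rfl⟩ := h2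
  rw [Nat.pair_eq_pair] at h3
  exact ⟨Prod.ext h3.1 h3.2, rfl⟩

/-- the fresh midpoint vertices -/
noncomputable def Zset (G : Dgraph) (k : ℕ) : Finset ℕ :=
  (G.Astar ×ˢ Finset.range k).image (fun p => fresh G p.1 p.2)

lemma mem_Zset {G : Dgraph} {k z : ℕ} :
    z ∈ Zset G k ↔ ∃ e ∈ G.Astar, ∃ i < k, z = fresh G e i := by
  simp only [Zset, Finset.mem_image, Finset.mem_product, Prod.exists, Finset.mem_range]
  constructor
  · rintro ⟨e1, e2, i, ⟨he, hi⟩, rfl⟩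
    exact ⟨e1, e2, he, i, hi, rfl⟩
  · rintro ⟨e1, e2, he, i, hi, rfl⟩
    exact ⟨e1, e2, i, ⟨he, hi⟩, rfl⟩

/-- bottom decode -/
noncomputable def gb (G : Dgraph) (x : ℕ) : ℕ :=
  if x ∈ G.V then x else (Nat.unpair (Nat.unpair (x - off G)).1).1

/-- top decode -/
noncomputable def gt (G : Dgraph) (x : ℕ) : ℕ :=
  if x ∈ G.V then x else (Nat.unpair (Nat.unpair (x - off G)).1).2

lemma gb_mem_V (G : Dgraph) {x : ℕ} (hx : x ∈ G.V) : gb G x = x := if_pos hx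
lemma gt_mem_V (G : Dgraph) {x : ℕ} (hx : x ∈ G.V) : gt G x = x := if_pos hx

lemma gb_fresh (G : Dgraph) (e : ℕ × ℕ) (i : ℕ) : gb G (fresh G e i) = e.1 := by
  rw [gb, if_neg fresh_not_mem]
  unfold fresh
  rw [Nat.add_sub_cancel_left, Nat.unpair_pair, Nat.unpair_pair]

lemma gt_fresh (G : Dgraph) (e : ℕ × ℕ) (i : ℕ) : gt G (fresh G e i) = e.2 := by
  rw [gt, if_neg fresh_not_mem]
  unfold fresh
  rw [Nat.add_sub_cancel_left, Nat.unpair_pair, Nat.unpair_pair]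

/-- arc or equal relation in `G` -/
def arcOrEq (G : Dgraph) (a b : ℕ) : Prop := (a, b) ∈ G.A ∨ (a = b ∧ a ∈ G.V)

noncomputable def gadget (G : Dgraph) (k : ℕ) : Dgraph where
  V := G.V ∪ Zset G k
  nonempty := G.nonempty.mono Finset.subset_union_left
  A := ((G.V ∪ Zset G k) ×ˢ (G.V ∪ Zset G k)).filter
    (fun p => p.1 = p.2 ∨ arcOrEq G (gt G p.1) (gb G p.2))
  A_sub := by
    intro p hp
    exact Finset.mem_product.mp (Finset.mem_filter.mp hp).1

lemma mem_gadget_A {G : Dgraph} {k x y : ℕ} :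
    (x, y) ∈ (gadget G k).A ↔ x ∈ G.V ∪ Zset G k ∧ y ∈ G.V ∪ Zset G k ∧
      (x = y ∨ arcOrEq G (gt G x) (gb G y)) := by
  simp only [gadget, Finset.mem_filter, Finset.mem_product, and_assoc]

/-- basic structure of vertices of the gadget -/
lemma bt_spec {G : Dgraph} {k x : ℕ} (hx : x ∈ G.V ∪ Zset G k) :
    (x ∈ G.V ∧ gb G x = x ∧ gt G x = x) ∨
    (x ∉ G.V ∧ (gb G x, gt G x) ∈ G.A ∧ gb G x ≠ gt G x) := by
  rcases Finset.mem_union.mp hx with hx | hx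
  · exact Or.inl ⟨hx, gb_mem_V G hx, gt_mem_V G hx⟩
  · obtain ⟨e, he, i, hi, rfl⟩ := mem_Zset.mp hx
    have hA := Finset.mem_filter.mp he
    refine Or.inr ⟨fresh_not_mem, ?_, ?_⟩
    · rw [gb_fresh, gt_fresh]; exact hA.1
    · rw [gb_fresh, gt_fresh]; exact hA.2

lemma bt_mem_V {G : Dgraph} {k x : ℕ} (hx : x ∈ G.V ∪ Zset G k) :
    gb G x ∈ G.V ∧ gt G x ∈ G.V := by
  rcases bt_spec hx with ⟨h1, h2, h3⟩ | ⟨h1, h2, h3⟩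
  · rw [h2, h3]; exact ⟨h1, h1⟩
  · exact ⟨(G.A_sub _ h2).1, (G.A_sub _ h2).2⟩

lemma arc_sub_gadget {G : Dgraph} {k : ℕ} {e : ℕ × ℕ} (he : e ∈ G.A) :
    e ∈ (gadget G k).A := by
  rcases e with ⟨u, v⟩
  have hu := (G.A_sub _ he).1
  have hv := (G.A_sub _ he).2
  refine mem_gadget_A.mpr ⟨Finset.mem_union_left _ hu, Finset.mem_union_left _ hv, Or.inr ?_⟩
  rw [gt_mem_V G hu, gb_mem_V G hv]
  exact Or.inl he

lemma arcOrEq_arc {G : Dgraph} (hG : G.IsPoset) {a b : ℕ} (h : arcOrEq G a b) : (a, b) ∈ G.A := by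
  rcases h with h | ⟨rfl, ha⟩
  · exact h
  · exact hG.1 a ha

lemma gb_le_gt {G : Dgraph} (hG : G.IsPoset) {k x : ℕ} (hx : x ∈ G.V ∪ Zset G k) :
    (gb G x, gt G x) ∈ G.A := by
  rcases bt_spec hx with ⟨h1, h2, h3⟩ | ⟨h1, h2, h3⟩
  · rw [h2, h3]; exact hG.1 x h1
  · exact h2

lemma poset_gadget {G : Dgraph} (hG : G.IsPoset) (k : ℕ) : (gadget G k).IsPoset := by
  refine ⟨?_, ?_, ?_⟩
  · intro v hv
    exact mem_gadget_A.mpr ⟨hv, hv, Or.inl rfl⟩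
  · intro x y h1 h2
    rw [mem_gadget_A] at h1 h2
    obtain ⟨hxV, hyV, h1⟩ := h1
    obtain ⟨-, -, h2⟩ := h2
    by_contra hne
    rcases h1 with rfl | h1
    · exact hne rfl
    rcases h2 with rfl | h2
    · exact hne rfl
    have a1 : (gt G x, gb G y) ∈ G.A := arcOrEq_arc hG h1
    have a2 : (gt G y, gb G x) ∈ G.A := arcOrEq_arc hG h2
    have bx := gb_le_gt hG hxV
    have by' := gb_le_gt hG hyV
    -- gt x ≤ gb y ≤ gt y ≤ gb x ≤ gt x
    have c1 : (gt G x, gb G x) ∈ G.A :=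
      hG.2.2 _ _ _ (hG.2.2 _ _ _ a1 by') a2
    have hbtx : gb G x = gt G x := hG.2.1 _ _ bx c1
    have c2 : (gt G y, gb G y) ∈ G.A :=
      hG.2.2 _ _ _ (hG.2.2 _ _ _ a2 bx) a1
    have hbty : gb G y = gt G y := hG.2.1 _ _ by' c2
    -- so x and y are old vertices
    have hxold : x ∈ G.V ∧ gb G x = x ∧ gt G x = x := by
      rcases bt_spec hxV with h | h
      · exact h
      · exact absurd hbtx h.2.2
    have hyold : y ∈ G.V ∧ gb G y = y ∧ gt G y = y := by
      rcases bt_spec hyV with h | h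
      · exact h
      · exact absurd hbty h.2.2
    -- x = gt x = gb y = y
    apply hne
    have : gt G x = gb G y := hG.2.1 _ _ a1 (hG.2.2 _ _ _ (hG.2.2 _ _ _ by' a2) bx)
    rw [← hxold.2.2, this, hyold.2.1]
  · intro x y w h1 h2
    rw [mem_gadget_A] at h1 h2 ⊢
    obtain ⟨hxV, hyV, h1⟩ := h1
    obtain ⟨-, hwV, h2⟩ := h2
    refine ⟨hxV, hwV, ?_⟩
    rcases h1 with rfl | h1
    · exact h2
    rcases h2 with rfl | h2
    · exact Or.inr h1
    refine Or.inr (Or.inl ?_)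
    have a1 : (gt G x, gb G y) ∈ G.A := arcOrEq_arc hG h1
    have a2 : (gt G y, gb G w) ∈ G.A := arcOrEq_arc hG h2
    exact hG.2.2 _ _ _ (hG.2.2 _ _ _ a1 (gb_le_gt hG hyV)) a2

/-! ### the gadget preserves membership in `𝔗ₐ` -/

noncomputable def btList (G : Dgraph) : List ℕ → List ℕ
  | [] => []
  | x :: t => gb G x :: gt G x :: btList G t

lemma mem_btList {G : Dgraph} {p : List ℕ} {x : ℕ} (hx : x ∈ p) :
    gb G x ∈ btList G p ∧ gt G x ∈ btList G p := by
  induction p with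
  | nil => simp at hx
  | cons y t ih =>
    rw [show btList G (y :: t) = gb G y :: gt G y :: btList G t from rfl]
    rcases List.mem_cons.mp hx with rfl | hx
    · simp
    · have := ih hx
      simp only [List.mem_cons]
      tauto

lemma btList_chain' {G : Dgraph} {k : ℕ} {p : List ℕ}
    (hp : p.Chain' (fun v w => (v, w) ∈ (gadget G k).A ∧ v ≠ w))
    (hmem : ∀ x ∈ p, x ∈ G.V ∪ Zset G k) :
    (btList G p).Chain' (fun a b => arcOrEq G a b) := by
  induction p with
  | nil => simp [btList, List.Chain']
  | cons x t ih =>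
    have hx : x ∈ G.V ∪ Zset G k := hmem x (by simp)
    have harc1 : arcOrEq G (gb G x) (gt G x) := by
      rcases bt_spec hx with ⟨h1, h2, h3⟩ | ⟨h1, h2, h3⟩
      · rw [h2, h3]; exact Or.inr ⟨rfl, h1⟩
      · exact Or.inl h2
    cases t with
    | nil => simp [btList, List.Chain', List.isChain_cons_cons, harc1]
    | cons y t' =>
      rw [List.Chain', List.isChain_cons_cons] at hp
      obtain ⟨⟨hxy, hne⟩, hp2⟩ := hp
      have hcross : arcOrEq G (gt G x) (gb G y) := by
        rcases mem_gadget_A.mp hxy with ⟨-, -, h | h⟩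
        · exact absurd h hne
        · exact h
      have ih2 := ih hp2 (fun z hz => hmem z (by simp [hz]))
      rw [show btList G (x :: y :: t') = gb G x :: gt G x :: btList G (y :: t') from rfl]
      rw [List.Chain', List.isChain_cons_cons, List.isChain_cons]
      refine ⟨harc1, ?_, ih2⟩
      intro z hz
      rw [show btList G (y :: t') = gb G y :: gt G y :: btList G t' from rfl] at hz
      simp only [List.head?_cons, Option.mem_def, Option.some_inj] at hz
      subst hz
      exact hcross

lemma btList_mem_V {G : Dgraph} {k : ℕ} {p : List ℕ} (hmem : ∀ x ∈ p, x ∈ G.V ∪ Zset G k) :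
    ∀ y ∈ btList G p, y ∈ G.V := by
  induction p with
  | nil => simp [btList]
  | cons x t ih =>
    intro y hy
    rw [show btList G (x :: t) = gb G x :: gt G x :: btList G t from rfl] at hy
    have hbt := bt_mem_V (hmem x (by simp))
    rcases List.mem_cons.mp hy with rfl | hy
    · exact hbt.1
    rcases List.mem_cons.mp hy with rfl | hy
    · exact hbt.2
    · exact ih (fun z hz => hmem z (by simp [hz])) y hy

lemma btList_getLast? {G : Dgraph} {p : List ℕ} (hp : p ≠ []) :
    (btList G p).getLast? = p.getLast?.map (gt G) := by
  induction p with
  | nil => simp at hp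
  | cons x t ih =>
    cases t with
    | nil => simp [btList]
    | cons y t' =>
      rw [show btList G (x :: y :: t') = gb G x :: gt G x :: btList G (y :: t') from rfl]
      rw [List.getLast?_cons_cons, List.getLast?_cons_cons]
      cases hbt : btList G (y :: t') with
      | nil => simp [btList] at hbt
      | cons a l =>
        rw [List.getLast?_cons_cons, ← hbt, ih (by simp)]

lemma memTa_gadget {G : Dgraph} (hG : G.MemTa) (k : ℕ) : (gadget G k).MemTa := by
  intro hcw
  apply hG
  obtain ⟨p, hV, hchain, hlen, hcl⟩ := hcw
  cases p with
  | nil => simp at hlen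
  | cons p0 rest =>
  cases rest with
  | nil => simp at hlen
  | cons p1 rest' =>
  set rest : List ℕ := p1 :: rest' with hrest
  -- the interleaved list, dropping the initial gb p0
  set L : List ℕ := gt G p0 :: btList G rest with hL
  have hbt : btList G (p0 :: rest) = gb G p0 :: L := rfl
  have hchainL : L.Chain' (fun a b => arcOrEq G a b) := by
    have h1 := btList_chain' (k := k) hchain hV
    rw [hbt] at h1
    exact h1.tail
  have hmemL : ∀ y ∈ L, y ∈ G.V := by
    intro y hy
    apply btList_mem_V hV
    rw [hbt]
    exact List.mem_cons_of_mem _ hy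
  have hp0_last : (p0 :: rest).getLast? = some p0 := by rw [← hcl]; rfl
  have hlastL : L.getLast? = some (gt G p0) := by
    have h1 : L.getLast? = (btList G (p0 :: rest)).getLast? := by
      rw [hbt]
      cases hc : L with
      | nil => simp [hL] at hc
      | cons a l => rw [List.getLast?_cons_cons, ← hc]
    rw [h1, btList_getLast? (by simp), hp0_last]
    rfl
  have hheadL : L.head? = some (gt G p0) := rfl
  -- p0 is an old vertex or distinctness argument
  have hp0_mem_rest : p0 ∈ rest := by
    have := List.getLast?_eq_getLast (l := p0 :: rest) (by simp)
    rw [hp0_last] at this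
    have h2 : List.getLast (p0 :: rest) (by simp) = p0 := by
      exact (Option.some_inj.mp this.symm)
    rw [List.getLast_cons (by simp [hrest])] at h2
    rw [← h2]
    exact List.getLast_mem _
  have hp0p1 : p0 ≠ p1 := by
    rw [List.Chain', List.isChain_cons_cons] at hchain
    exact hchain.1.2
  -- two distinct elements of L
  have hne2 : ∃ a ∈ L, ∃ b ∈ L, a ≠ b := by
    by_contra hcon
    push_neg at hcon
    have hall : ∀ x ∈ rest, x = gt G p0 := by
      intro x hx
      have hxV := hV x (List.mem_cons_of_mem _ hx)
      have h1 : gb G x ∈ L := by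
        rw [hL]
        exact List.mem_cons_of_mem _ (mem_btList hx).1
      have h2 : gt G x ∈ L := by
        rw [hL]
        exact List.mem_cons_of_mem _ (mem_btList hx).2
      have hgbgt : gb G x = gt G x := hcon _ h1 _ h2
      have hold : x ∈ G.V ∧ gb G x = x ∧ gt G x = x := by
        rcases bt_spec hxV with h | h
        · exact h
        · exact absurd hgbgt h.2.2
      rw [← hold.2.1]
      exact hcon _ h1 _ (by rw [hL]; simp)
    have h1 := hall p0 hp0_mem_rest
    have h2 := hall p1 (by rw [hrest]; simp)
    exact hp0p1 (h1.trans h2.symm)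
  obtain ⟨a, ha, b, hb, hab⟩ := hne2
  refine ⟨clean L, ?_, ?_, ?_, ?_⟩
  · intro x hx; exact hmemL x (clean_mem hx)
  · have h1 := clean_chain' hchainL
    apply h1.imp
    intro c d hcd
    obtain ⟨hcd1, hcd2⟩ := hcd
    rcases hcd1 with h | ⟨rfl, -⟩
    · exact ⟨h, hcd2⟩
    · exact absurd rfl hcd2
  · exact clean_two_le ha hb hab
  · rw [clean_head?, clean_getLast?, hheadL, hlastL]

lemma Zset_not_mem_V {G : Dgraph} {k z : ℕ} (hz : z ∈ Zset G k) : z ∉ G.V := by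
  obtain ⟨e, he, i, hi, rfl⟩ := mem_Zset.mp hz
  exact fresh_not_mem

lemma gadget_count (G R : Dgraph) (hR : R.IsPoset) (k : ℕ) :
    (Hom (gadget G k) R).ncard =
      ∑ ξ ∈ homFinset G R, ∏ e ∈ G.Astar, (R.iota (ξ e.1) (ξ e.2)) ^ k := by
  classical
  rw [ncard_hom]
  have hmaps : ∀ f ∈ homFinset (gadget G k) R, restrict G.V f ∈ homFinset G R := by
    intro f hf
    rw [mem_homFinset] at hf ⊢
    refine ⟨?_, ?_, ?_⟩
    · intro v hv
      rw [restrict, if_pos hv]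
      exact hf.1 v (Finset.mem_union_left _ hv)
    · rintro ⟨u, v⟩ he
      have hu := (G.A_sub _ he).1
      have hv := (G.A_sub _ he).2
      rw [restrict, restrict, if_pos hu, if_pos hv]
      exact hf.2.1 (u, v) (arc_sub_gadget he)
    · intro v hv
      rw [restrict, if_neg hv]
  rw [Finset.card_eq_sum_card_fiberwise hmaps]
  apply Finset.sum_congr rfl
  intro ξ hξ
  rw [mem_homFinset] at hξ
  -- identify the fiber with the extension set
  have hfib : ↑((homFinset (gadget G k) R).filter (fun f => restrict G.V f = ξ)) =
      {f : ℕ → ℕ | (∀ z ∈ Zset G k, f z ∈ R.interval (ξ (gb G z)) (ξ (gt G z))) ∧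
        ∀ v ∉ Zset G k, f v = ξ v} := by
    ext f
    simp only [Finset.coe_filter, Set.mem_setOf_eq, mem_homFinset]
    constructor
    · rintro ⟨hfhom, hres⟩
      have hfV : ∀ v ∈ G.V, f v = ξ v := by
        intro v hv
        rw [← hres, restrict, if_pos hv]
      refine ⟨?_, ?_⟩
      · intro z hz
        obtain ⟨e, he, i, hi, rfl⟩ := mem_Zset.mp hz
        have heA := (Finset.mem_filter.mp he).1
        have he1 := (G.A_sub _ heA).1
        have he2 := (G.A_sub _ heA).2
        have hzV' : fresh G e i ∈ G.V ∪ Zset G k := Finset.mem_union_right _ hz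
        have harc1 : (e.1, fresh G e i) ∈ (gadget G k).A := by
          refine mem_gadget_A.mpr ⟨Finset.mem_union_left _ he1, hzV', Or.inr (Or.inr ?_)⟩
          rw [gt_mem_V G he1, gb_fresh]
          exact ⟨rfl, he1⟩
        have harc2 : (fresh G e i, e.2) ∈ (gadget G k).A := by
          refine mem_gadget_A.mpr ⟨hzV', Finset.mem_union_left _ he2, Or.inr (Or.inr ?_)⟩
          rw [gt_fresh, gb_mem_V G he2]
          exact ⟨rfl, he2⟩
        have h1 := hfhom.2.1 _ harc1
        have h2 := hfhom.2.1 _ harc2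
        simp only at h1 h2
        rw [hfV _ he1] at h1
        rw [hfV _ he2] at h2
        rw [interval, Finset.mem_filter, gb_fresh, gt_fresh]
        exact ⟨hfhom.1 _ hzV', h1, h2⟩
      · intro v hv
        by_cases hvV : v ∈ G.V
        · exact hfV v hvV
        · have hv' : v ∉ G.V ∪ Zset G k := by
            rw [Finset.mem_union]; tauto
          rw [hfhom.2.2 v hv', hξ.2.2 v hvV]
    · rintro ⟨hZ, hrest⟩
      have hfV : ∀ v ∈ G.V, f v = ξ v := fun v hv => hrest v (fun h => Zset_not_mem_V h hv)
      -- the sandwich property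
      have hup : ∀ x ∈ G.V ∪ Zset G k,
          f x ∈ R.V ∧ (ξ (gb G x), f x) ∈ R.A ∧ (f x, ξ (gt G x)) ∈ R.A := by
        intro x hx
        rcases Finset.mem_union.mp hx with hxV | hxZ
        · rw [hfV x hxV, gb_mem_V G hxV, gt_mem_V G hxV]
          have := hξ.1 x hxV
          exact ⟨this, hR.1 _ this, hR.1 _ this⟩
        · have := hZ x hxZ
          rw [interval, Finset.mem_filter] at this
          exact ⟨this.1, this.2.1, this.2.2⟩
      constructor
      constructor
      · intro x hx
        exact (hup x hx).1
      constructor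
      · rintro ⟨x, y⟩ hxy
        obtain ⟨hxV, hyV, hcase⟩ := mem_gadget_A.mp hxy
        rcases hcase with rfl | hcase
        · exact hR.1 _ (hup x hxV).1
        · have hmid : (ξ (gt G x), ξ (gb G y)) ∈ R.A := by
            rcases hcase with h | ⟨heq, hmem⟩
            · exact hξ.2.1 _ h
            · rw [heq]
              have : gb G y ∈ G.V := heq ▸ hmem
              exact hR.1 _ (hξ.1 _ this)
          have h1 := (hup x hxV).2.2
          have h2 := (hup y hyV).2.1
          exact hR.2.2 _ _ _ (hR.2.2 _ _ _ h1 hmid) h2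
      · intro v hv
        have hv' : v ∉ G.V ∧ v ∉ Zset G k := by
          rw [show (gadget G k).V = G.V ∪ Zset G k from rfl, Finset.mem_union] at hv
          push_neg at hv
          exact hv
        rw [hrest v hv'.2]
        exact hξ.2.2 v hv'.1
      · funext v
        by_cases hv : v ∈ G.V
        · rw [restrict, if_pos hv]
          exact hfV v hv
        · rw [restrict, if_neg hv]
          exact (hξ.2.2 v hv).symm
  have hcard : ((homFinset (gadget G k) R).filter (fun f => restrict G.V f = ξ)).card =
      ∏ z ∈ Zset G k, (R.interval (ξ (gb G z)) (ξ (gt G z))).card := by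
    rw [← Set.ncard_coe_finset, hfib, card_ext]
  rw [hcard]
  -- now convert the product over fresh vertices
  rw [Zset, Finset.prod_image
    (fun p _ p' _ heq => Prod.ext (fresh_inj heq).1 (fresh_inj heq).2)]
  have h1 : ∀ p ∈ G.Astar ×ˢ Finset.range k,
      (R.interval (ξ (gb G (fresh G p.1 p.2))) (ξ (gt G (fresh G p.1 p.2)))).card
        = R.iota (ξ p.1.1) (ξ p.1.2) := by
    intro p _
    rw [gb_fresh, gt_fresh]
    rfl
  rw [Finset.prod_congr rfl h1, Finset.prod_product]
  apply Finset.prod_congr rfl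
  intro e he
  have h2 : (∏ i ∈ Finset.range k, R.iota (ξ (e, i).1.1) (ξ (e, i).1.2)) =
      ∏ _i ∈ Finset.range k, R.iota (ξ e.1) (ξ e.2) := rfl
  rw [h2, Finset.prod_const, Finset.card_range]

/-- hard direction, for any gadget-closed class -/
lemma hom_imp_shom {R S : Dgraph} (hR : R.IsPoset) (hS : S.IsPoset)
    (hhR : R.height ≤ 1) (hhS : S.height ≤ 1)
    {C : Dgraph → Prop} (hC : ∀ (G : Dgraph) (k : ℕ), C G → C (gadget G k))
    (h : ∀ G : Dgraph, C G → (Hom G R).ncard ≤ (Hom G S).ncard)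
    (G : Dgraph) (hG : C G) : (SHom G R).ncard ≤ (SHom G S).ncard := by
  classical
  by_cases hm : G.Astar = ∅
  · rw [shom_eq_hom_of_astar_empty hm, shom_eq_hom_of_astar_empty hm]
    exact h G hG
  · have hm1 : 1 ≤ G.Astar.card := Finset.card_pos.mpr (Finset.nonempty_iff_ne_empty.mpr hm)
    rw [ncard_shom, ncard_shom]
    apply extract_top _ _ _ _ G.Astar.card hm1
      (fun f _ => sCount_le G R f) (fun f _ => sCount_le G S f)
    intro k
    have hprod : ∀ (T : Dgraph), T.IsPoset → T.height ≤ 1 → ∀ ξ ∈ homFinset G T,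
        (∏ e ∈ G.Astar, (T.iota (ξ e.1) (ξ e.2)) ^ k) = 2 ^ (k * sCount G T ξ) := by
      intro T hT hhT ξ hξ
      rw [mem_homFinset] at hξ
      have hterm : ∀ e ∈ G.Astar, (T.iota (ξ e.1) (ξ e.2)) ^ k =
          if ξ e.1 ≠ ξ e.2 then 2 ^ k else 1 := by
        intro e he
        have heA := (Finset.mem_filter.mp he).1
        have harc : (ξ e.1, ξ e.2) ∈ T.A := hξ.2.1 _ heA
        have h1 := iota_classify hT hhT (hξ.1 _ (G.A_sub _ heA).1) harc
        by_cases heq : ξ e.1 = ξ e.2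
        · rw [h1, if_pos heq, if_neg (not_not.mpr heq), one_pow]
        · rw [h1, if_neg heq, if_pos heq]
      rw [Finset.prod_congr rfl hterm, Finset.prod_ite, Finset.prod_const, Finset.prod_const,
        one_pow, mul_one, ← pow_mul, sCount]
    have hcount := h (gadget G k) (hC G k hG)
    rw [gadget_count G R hR k, gadget_count G S hS k,
      Finset.sum_congr rfl (hprod R hR hhR), Finset.sum_congr rfl (hprod S hS hhS)] at hcount
    exact hcount

end StmtAux

open StmtAux in
theorem stmt_2 (R S : Dgraph) (hR : R.IsPoset) (hS : S.IsPoset)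
    (hEq : R.height = S.height) (hle : R.height ≤ 1) :
    ((∀ G : Dgraph, G.MemTa → (Hom G R).ncard ≤ (Hom G S).ncard) ↔
      (∀ G : Dgraph, G.MemTa → (SHom G R).ncard ≤ (SHom G S).ncard)) ∧
    ((∀ G : Dgraph, G.IsPoset → (Hom G R).ncard ≤ (Hom G S).ncard) ↔
      (∀ G : Dgraph, G.IsPoset → (SHom G R).ncard ≤ (SHom G S).ncard)) := by
  have hhS : S.height ≤ 1 := hEq ▸ hle
  constructor
  · constructor
    · intro h
      exact hom_imp_shom hR hS hle hhS (fun G k hG => memTa_gadget hG k) h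
    · intro h G _
      exact shom_imp_hom_ta hR hS h G
  · constructor
    · intro h
      exact hom_imp_shom hR hS hle hhS (fun G k hG => poset_gadget hG k) h
    · intro h G _
      exact shom_imp_hom_poset hR hS h G
end

section
/- Let n ∈ ℕ₀ and G ∈ 𝔗_a^{≈n}. There exists a real number φ_G with 0 < φ_G ≤ 1 such that #𝓢(G,H) = φ_G · #𝓙^{𝓛(G)}_{G,H}(σ) for every H ∈ ℭ^{h=n} and every σ ∈ 𝓢(G,H). -/
open Dgraph

/-- The arc relation of the transitive reduction with loops removed, `G_×`:
proper arcs `vw` of `G` admitting no path of length ≥ 2 in `G*` from `v` to `w`. -/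
def RdArc (G : Dgraph) (v w : ℕ) : Prop :=
  (v, w) ∈ G.A ∧ v ≠ w ∧
    ¬ ∃ q : List ℕ, G.IsPathStar q ∧ 3 ≤ q.length ∧
      q.head? = some v ∧ q.getLast? = some w

/-- Paths in `G_×`. -/
def IsPathx (G : Dgraph) (p : List ℕ) : Prop :=
  p ≠ [] ∧ p.Nodup ∧ (∀ v ∈ p, v ∈ G.V) ∧ p.Chain' (RdArc G)

/-- `V(G)^h`: vertices lying on a path of length `h_G`. -/
def Vh (G : Dgraph) : Set ℕ :=
  {v | ∃ p, G.IsPath p ∧ p.length = G.height + 1 ∧ v ∈ p}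

/-- `V(G)^{-h} = V(G) ∖ V(G)^h`. -/
def Vmh (G : Dgraph) : Set ℕ := {v | v ∈ G.V ∧ v ∉ Vh G}

/-- `B` is a bottom shell of `v ∈ V(G)^{-h}`. -/
def IsBottomShell (G : Dgraph) (v : ℕ) (B : Set ℕ) : Prop :=
  B ⊆ Vh G ∧
  (∀ b ∈ B, ∃ p, IsPathx G p ∧ p.head? = some b ∧ p.getLast? = some v) ∧
  (∀ p, IsPathx G p → (∃ b ∈ Vh G, p.head? = some b) → p.getLast? = some v →
    ∃ x ∈ B, x ∈ p)

/-- `U` is an upper shell of `v ∈ V(G)^{-h}`. -/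
def IsUpperShell (G : Dgraph) (v : ℕ) (U : Set ℕ) : Prop :=
  U ⊆ Vh G ∧
  (∀ u ∈ U, ∃ p, IsPathx G p ∧ p.head? = some v ∧ p.getLast? = some u) ∧
  (∀ p, IsPathx G p → p.head? = some v → (∃ u ∈ Vh G, p.getLast? = some u) →
    ∃ x ∈ U, x ∈ p)

/-- Symmetrized adjacency of `G_×` restricted to `V(G)^{-h}`. -/
def adjx (G : Dgraph) (a b : ℕ) : Prop :=
  (RdArc G a b ∨ RdArc G b a) ∧ a ∈ Vmh G ∧ b ∈ Vmh G

/-- `Z ∈ 𝓩(G)`: `Z` is a connectivity component of `G_×` restricted to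
`V(G)^{-h}`. -/
def IsComponent (G : Dgraph) (Z : Set ℕ) : Prop :=
  ∃ v ∈ Vmh G, Z = {w | w ∈ Vmh G ∧ Relation.ReflTransGen (adjx G) v w}

/-- The interval `[b,u]_{Tr(G)}` in the transitive hull of `G`. -/
def trInterval (G : Dgraph) (b u : ℕ) : Set ℕ :=
  {z | Relation.TransGen (fun a c => (a, c) ∈ G.A) b z ∧
       Relation.TransGen (fun a c => (a, c) ∈ G.A) z u}

/-- The class `𝔗ₐ^{≈n}`. -/
def MemTaApprox (n : ℕ) (G : Dgraph) : Prop :=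
  G.MemTa ∧ G.height = n ∧
  ∃ B U : ℕ → Set ℕ,
    (∀ v ∈ Vmh G, IsBottomShell G v (B v) ∧ IsUpperShell G v (U v)) ∧
    ∀ Z, IsComponent G Z → ∃ b ∈ Vh G, ∃ u ∈ Vh G,
      ((⋃ z ∈ Z, B z) ∪ Z ∪ ⋃ z ∈ Z, U z) ⊆ trInterval G b u

/-- The class `ℭ^{h=n}`: posets in which every maximal path has length `n` and
in which every interval `[v,w]` is the vertex set of a path. -/
def MemC (n : ℕ) (R : Dgraph) : Prop :=
  R.IsPoset ∧ (∀ P, MaximalPath R P → P.length = n + 1) ∧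
  ∀ p ∈ R.A, ∃ q : List ℕ, R.IsPath q ∧ ∀ x, x ∈ q ↔ x ∈ R.interval p.1 p.2
namespace StrictCount
open Dgraph

/-! ### Basic list/path lemmas -/

lemma chain'_getElem {R : ℕ → ℕ → Prop} {l : List ℕ} (h : l.Chain' R)
    {i : ℕ} (hi : i + 1 < l.length) : R l[i] l[i+1] := by
  have := List.isChain_iff_getElem.1 h i hi
  simpa using this

lemma chain'_of_getElem {R : ℕ → ℕ → Prop} {l : List ℕ}
    (h : ∀ (i : ℕ) (hi : i + 1 < l.length), R l[i] l[i+1]) : l.Chain' R := by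
  refine List.isChain_iff_getElem.2 (fun i hi => ?_)
  simpa using h i (by omega)

lemma nodup_getElem_ne {l : List ℕ} (h : l.Nodup) {i j : ℕ}
    (hi : i < l.length) (hj : j < l.length) (hij : i ≠ j) : l[i] ≠ l[j] := by
  intro he
  exact hij ((h.getElem_inj_iff).1 he)

/-- In any digraph, a path is automatically a star-path. -/
lemma isPath_iff_isPathStar (D : Dgraph) (p : List ℕ) :
    D.IsPath p ↔ D.IsPathStar p := by
  constructor
  · rintro ⟨h1, h2, h3, h4⟩
    refine ⟨h1, h2, h3, chain'_of_getElem (fun i hi => ?_)⟩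
    exact ⟨chain'_getElem h4 hi, nodup_getElem_ne h2 (by omega) hi (by omega)⟩
  · rintro ⟨h1, h2, h3, h4⟩
    exact ⟨h1, h2, h3, List.IsChain.imp (fun _ _ hab => hab.1) h4⟩

lemma path_length_le_card {D : Dgraph} {p : List ℕ} (hp : D.IsPath p) :
    p.length ≤ D.V.card := by
  classical
  have h1 : p.toFinset ⊆ D.V := fun v hv => hp.2.2.1 v (List.mem_toFinset.1 hv)
  have := Finset.card_le_card h1
  rwa [List.toFinset_card_of_nodup hp.2.1] at this

/-- The set defining the height is nonempty and bounded above. -/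
lemma height_set_bddAbove (D : Dgraph) :
    BddAbove {n | ∃ p, D.IsPath p ∧ p.length = n + 1} := by
  refine ⟨D.V.card, fun k ⟨p, hp, hl⟩ => ?_⟩
  have := path_length_le_card hp
  omega

lemma path_length_le_height {D : Dgraph} {p : List ℕ} (hp : D.IsPath p) :
    p.length ≤ D.height + 1 := by
  rcases p with _ | ⟨a, t⟩
  · simp
  · have : (a :: t).length - 1 ∈ {n | ∃ p, D.IsPath p ∧ p.length = n + 1} :=
      ⟨a :: t, hp, by simp⟩
    have h2 := le_csSup (height_set_bddAbove D) this
    simp only [Dgraph.height]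
    omega

end StrictCount
namespace StrictCount

lemma getElem_congr_idx {l : List ℕ} {i j : ℕ} (h : i = j) {hi : i < l.length} :
    l[i] = l[j]'(h ▸ hi) := by subst h; rfl

lemma head?_getElem {l : List ℕ} {x : ℕ} (h : l.head? = some x) :
    ∃ hl : 0 < l.length, l[0] = x := by
  rcases l with _ | ⟨a, t⟩
  · simp at h
  · simp at h; exact ⟨by simp, by simp [h]⟩

lemma getLast?_getElem {l : List ℕ} {x : ℕ} (h : l.getLast? = some x) :
    ∃ hl : 0 < l.length, l[l.length - 1] = x := by
  rw [List.getLast?_eq_getElem?] at h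
  rcases List.getElem?_eq_some_iff.1 h with ⟨h1, h2⟩
  exact ⟨by omega, h2⟩

lemma getElem_getLast? {l : List ℕ} (hl : 0 < l.length) :
    l.getLast? = some l[l.length - 1] := by
  rw [List.getLast?_eq_getElem?, List.getElem?_eq_getElem (by omega)]

lemma getElem_head? {l : List ℕ} (hl : 0 < l.length) :
    l.head? = some l[0] := by
  rw [List.head?_eq_getElem?, List.getElem?_eq_getElem (by omega)]

lemma chain'_rel_of_lt {R : ℕ → ℕ → Prop} (tr : ∀ a b c, R a b → R b c → R a c)
    {l : List ℕ} (h : l.Chain' R) :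
    ∀ (j i : ℕ) (hij : i < j) (hj : j < l.length), R (l[i]'(by omega)) l[j] := by
  intro j
  induction j with
  | zero => omega
  | succ k ih =>
    intro i hij hj
    rcases Nat.lt_or_ge i k with h' | h'
    · exact tr _ _ _ (ih i h' (by omega)) (chain'_getElem h hj)
    · have hik : i = k := by omega
      subst hik
      exact chain'_getElem h hj

/-- A transitive+antisymmetric (poset) digraph has no closed star walk. -/
lemma poset_memTa {D : Dgraph} (hp : D.IsPoset) : D.MemTa := by
  rintro ⟨p, hmem, hch, hlen, hcl⟩
  obtain ⟨h0, hh⟩ := head?_getElem (l := p) (x := p[0]) (getElem_head? (by omega))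
  have hlast := getElem_getLast? (l := p) (by omega : 0 < p.length)
  rw [← hcl, getElem_head? (by omega)] at hlast
  have heq : p[0] = p[p.length - 1] := by
    exact Option.some_injective _ hlast
  have h01 : (p[0], p[1]) ∈ D.A ∧ p[0] ≠ p[1] := chain'_getElem hch (by omega)
  rcases Nat.lt_or_ge 1 (p.length - 1) with hm | hm
  · have h1m : (p[1], p[p.length - 1]) ∈ D.A ∧ p[1] ≠ p[p.length-1] :=
      chain'_rel_of_lt (fun a b c hab hbc =>
        ⟨hp.2.2 a b c hab.1 hbc.1, by
          intro hac; subst hac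
          exact hbc.2 (hp.2.1 _ _ hbc.1 hab.1)⟩) hch (p.length - 1) 1 hm (by omega)
    exact h01.2 (hp.2.1 _ _ h01.1 (heq ▸ h1m.1))
  · have h1 : p.length - 1 = 1 := by omega
    have heq1 : p[0] = p[1] := by
      rw [heq]; exact getElem_congr_idx h1
    exact h01.2 heq1

/-! ### The rank function `rho` -/

noncomputable def rho (D : Dgraph) (x : ℕ) : ℕ :=
  sSup {k | ∃ p, D.IsPath p ∧ p.getLast? = some x ∧ p.length = k + 1}

lemma rho_bddAbove (D : Dgraph) (x : ℕ) :
    BddAbove {k | ∃ p, D.IsPath p ∧ p.getLast? = some x ∧ p.length = k + 1} := by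
  refine ⟨D.V.card, fun k ⟨p, hp, _, hl⟩ => ?_⟩
  have := path_length_le_card hp
  omega

lemma rho_singleton_mem {D : Dgraph} {x : ℕ} (hx : x ∈ D.V) :
    (0 : ℕ) ∈ {k | ∃ p, D.IsPath p ∧ p.getLast? = some x ∧ p.length = k + 1} :=
  ⟨[x], ⟨by simp, by simp, by simpa, List.isChain_singleton x⟩, by simp, by simp⟩

lemma rho_witness {D : Dgraph} {x : ℕ} (hx : x ∈ D.V) :
    ∃ p, D.IsPath p ∧ p.getLast? = some x ∧ p.length = rho D x + 1 :=
  Nat.sSup_mem ⟨0, rho_singleton_mem hx⟩ (rho_bddAbove D x)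

lemma rho_ge {D : Dgraph} {x : ℕ} {p : List ℕ} (hp : D.IsPath p)
    (hl : p.getLast? = some x) {k : ℕ} (hk : p.length = k + 1) : k ≤ rho D x :=
  le_csSup (rho_bddAbove D x) ⟨p, hp, hl, hk⟩

lemma rho_le_height {D : Dgraph} {x : ℕ} (hx : x ∈ D.V) : rho D x ≤ D.height := by
  obtain ⟨p, hp, _, hl⟩ := rho_witness hx
  have h2 := path_length_le_height hp
  omega

/-- suffix path starting at a given vertex -/
lemma suffix_path {D : Dgraph} {p : List ℕ} (hp : D.IsPath p) {y : ℕ} (hy : y ∈ p) :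
    ∃ s, D.IsPath s ∧ s.head? = some y ∧ s.getLast? = p.getLast? := by
  obtain ⟨l₁, l₂, rfl⟩ := List.append_of_mem hy
  have hsub : (y :: l₂).Sublist (l₁ ++ y :: l₂) := List.sublist_append_right l₁ _
  refine ⟨y :: l₂, ⟨by simp, hp.2.1.sublist hsub, fun v hv => hp.2.2.1 v (hsub.mem hv),
    hp.2.2.2.suffix ⟨l₁, rfl⟩⟩, by simp, ?_⟩
  exact (List.getLast?_append_of_ne_nil _ (by simp)).symm

/-- key acyclicity fact: no arc from the end of a path back into the path -/
lemma no_back_arc {D : Dgraph} (hTa : D.MemTa) {p : List ℕ} (hp : D.IsPath p)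
    {x y : ℕ} (hl : p.getLast? = some x) (ha : (x, y) ∈ D.A) (hxy : x ≠ y)
    (hy : y ∈ p) : False := by
  obtain ⟨s, hs, hsh, hsl⟩ := suffix_path hp hy
  rw [hl] at hsl
  apply hTa
  refine ⟨s ++ [y], ?_, ?_, ?_, ?_⟩
  · intro v hv
    rcases List.mem_append.1 hv with h | h
    · exact hs.2.2.1 v h
    · simp at h; subst h; exact (D.A_sub _ ha).2
  · show List.IsChain _ _; rw [List.isChain_append]
    refine ⟨((isPath_iff_isPathStar D s).1 hs).2.2.2, by simp, ?_⟩
    intro a ha' b hb'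
    simp at hb'; subst hb'
    rw [hsl] at ha'; simp at ha'; subst ha'
    exact ⟨ha, hxy⟩
  · have : s ≠ [] := hs.1
    have : 0 < s.length := List.length_pos_iff.2 this
    simp; omega
  · rcases s with _ | ⟨a, t⟩
    · exact absurd rfl hs.1
    · simp at hsh
      subst hsh
      rw [List.getLast?_append_of_ne_nil _ (by simp : [a] ≠ [])]
      simp

end StrictCount
namespace StrictCount
open Dgraph

lemma rho_arc_lt {D : Dgraph} (hTa : D.MemTa) {x y : ℕ} (ha : (x, y) ∈ D.A)
    (hxy : x ≠ y) : rho D x < rho D y := by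
  have hxV : x ∈ D.V := (D.A_sub _ ha).1
  have hyV : y ∈ D.V := (D.A_sub _ ha).2
  obtain ⟨p, hp, hl, hlen⟩ := rho_witness hxV
  have hynotp : y ∉ p := fun hyp => no_back_arc hTa hp hl ha hxy hyp
  have hq : D.IsPath (p ++ [y]) := by
    refine ⟨by simp, ?_, ?_, ?_⟩
    · exact hp.2.1.append (by simp) (by simpa using hynotp)
    · intro v hv
      rcases List.mem_append.1 hv with h | h
      · exact hp.2.2.1 v h
      · simp at h; subst h; exact hyV
    · show List.IsChain _ _; rw [List.isChain_append]
      refine ⟨hp.2.2.2, by simp, ?_⟩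
      intro a ha' b hb'
      simp at hb'; subst hb'
      rw [hl] at ha'; simp at ha'; subst ha'
      exact ha
  have := rho_ge (x := y) hq (by rw [List.getLast?_append_of_ne_nil _ (by simp)]; simp)
    (k := rho D x + 1) (by simp [hlen])
  omega

lemma rho_mono {D : Dgraph} (hTa : D.MemTa) {x y : ℕ} (ha : (x, y) ∈ D.A) :
    rho D x ≤ rho D y := by
  by_cases h : x = y
  · subst h; exact le_rfl
  · exact le_of_lt (rho_arc_lt hTa ha h)

lemma poset_srel_trans {D : Dgraph} (hp : D.IsPoset) :
    ∀ a b c, ((a, b) ∈ D.A ∧ a ≠ b) → ((b, c) ∈ D.A ∧ b ≠ c) → ((a, c) ∈ D.A ∧ a ≠ c) :=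
  fun a b c hab hbc =>
    ⟨hp.2.2 a b c hab.1 hbc.1, by
      intro hac; subst hac
      exact hbc.2 (hp.2.1 _ _ hbc.1 hab.1)⟩

lemma poset_path_pairwise {D : Dgraph} (hpo : D.IsPoset) {l : List ℕ}
    (h : D.IsPath l) : l.Pairwise (fun v w => (v, w) ∈ D.A ∧ v ≠ w) := by
  refine List.pairwise_iff_getElem.2 (fun i j hi hj hij => ?_)
  exact chain'_rel_of_lt (poset_srel_trans hpo)
    ((isPath_iff_isPathStar D l).1 h).2.2.2 j i hij hj

lemma pairwise_comparable {R : ℕ → ℕ → Prop} {l : List ℕ} (h : l.Pairwise R)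
    {x y : ℕ} (hx : x ∈ l) (hy : y ∈ l) : x = y ∨ R x y ∨ R y x := by
  obtain ⟨i, hi, rfl⟩ := List.mem_iff_getElem.1 hx
  obtain ⟨j, hj, rfl⟩ := List.mem_iff_getElem.1 hy
  rcases Nat.lt_trichotomy i j with hij | hij | hij
  · exact Or.inr (Or.inl (List.pairwise_iff_getElem.1 h i j hi hj hij))
  · subst hij; exact Or.inl rfl
  · exact Or.inr (Or.inr (List.pairwise_iff_getElem.1 h j i hj hi hij))

lemma exists_maximal_path_aux {D : Dgraph} :
    ∀ (k : ℕ) (p : List ℕ), D.IsPath p → D.V.card ≤ p.length + k →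
      ∃ q, D.MaximalPath q ∧ ∀ v ∈ p, v ∈ q := by
  intro k
  induction k with
  | zero =>
    intro p hp hk
    refine ⟨p, ⟨hp, fun Q hQ hPQ v hv => ?_⟩, fun v hv => hv⟩
    have hsub : p.toFinset ⊆ Q.toFinset := fun w hw =>
      List.mem_toFinset.2 (hPQ w (List.mem_toFinset.1 hw))
    have h1 : Q.toFinset.card ≤ p.toFinset.card := by
      rw [List.toFinset_card_of_nodup hp.2.1, List.toFinset_card_of_nodup hQ.2.1]
      have := path_length_le_card hQ
      omega
    have heq := Finset.eq_of_subset_of_card_le hsub h1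
    exact List.mem_toFinset.1 (by rw [heq]; exact List.mem_toFinset.2 hv)
  | succ k ih =>
    intro p hp hk
    by_cases hm : D.MaximalPath p
    · exact ⟨p, hm, fun v hv => hv⟩
    · have : ∃ Q, D.IsPath Q ∧ (∀ v ∈ p, v ∈ Q) ∧ ∃ v ∈ Q, v ∉ p := by
        by_contra hcon
        push_neg at hcon
        exact hm ⟨hp, fun Q hQ hPQ v hv => hcon Q hQ hPQ v hv⟩
      obtain ⟨Q, hQ, hPQ, v, hvQ, hvp⟩ := this
      have hsub : p.toFinset ⊂ Q.toFinset := by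
        constructor
        · exact fun w hw => List.mem_toFinset.2 (hPQ w (List.mem_toFinset.1 hw))
        · intro hsub'
          exact hvp (List.mem_toFinset.1 (hsub' (List.mem_toFinset.2 hvQ)))
      have hlt : p.length < Q.length := by
        have := Finset.card_lt_card hsub
        rwa [List.toFinset_card_of_nodup hp.2.1, List.toFinset_card_of_nodup hQ.2.1] at this
      obtain ⟨q, hq, hQq⟩ := ih Q hQ (by omega)
      exact ⟨q, hq, fun w hw => hQq w (hPQ w hw)⟩

lemma exists_maximal_path {D : Dgraph} {p : List ℕ} (hp : D.IsPath p) :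
    ∃ q, D.MaximalPath q ∧ ∀ v ∈ p, v ∈ q :=
  exists_maximal_path_aux D.V.card p hp (by omega)

lemma memC_path_len {n : ℕ} {H : Dgraph} (hC : MemC n H) {p : List ℕ}
    (hp : H.IsPath p) : p.length ≤ n + 1 := by
  obtain ⟨q, hq, hpq⟩ := exists_maximal_path hp
  have hql : q.length = n + 1 := hC.2.1 q hq
  have hsub : p.toFinset ⊆ q.toFinset := fun w hw =>
    List.mem_toFinset.2 (hpq w (List.mem_toFinset.1 hw))
  have := Finset.card_le_card hsub
  rw [List.toFinset_card_of_nodup hp.2.1, List.toFinset_card_of_nodup hq.1.2.1] at this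
  omega

lemma memC_rho_le {n : ℕ} {H : Dgraph} (hC : MemC n H) {x : ℕ} (hx : x ∈ H.V) :
    rho H x ≤ n := by
  obtain ⟨p, hp, _, hl⟩ := rho_witness hx
  have := memC_path_len hC hp
  omega

end StrictCount
namespace StrictCount
open Dgraph

lemma mem_interval {H : Dgraph} {v w z : ℕ} :
    z ∈ H.interval v w ↔ z ∈ H.V ∧ (v, z) ∈ H.A ∧ (z, w) ∈ H.A := by
  simp [Dgraph.interval, Finset.mem_filter]

lemma interval_subset_V {H : Dgraph} {v w : ℕ} : H.interval v w ⊆ H.V :=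
  fun z hz => (mem_interval.1 hz).1

lemma interval_mem_left {H : Dgraph} (hpo : H.IsPoset) {v w : ℕ}
    (ha : (v, w) ∈ H.A) : v ∈ H.interval v w :=
  mem_interval.2 ⟨(H.A_sub _ ha).1, hpo.1 v (H.A_sub _ ha).1, ha⟩

lemma interval_mem_right {H : Dgraph} (hpo : H.IsPoset) {v w : ℕ}
    (ha : (v, w) ∈ H.A) : w ∈ H.interval v w :=
  mem_interval.2 ⟨(H.A_sub _ ha).2, ha, hpo.1 w (H.A_sub _ ha).2⟩

lemma interval_comparable {n : ℕ} {H : Dgraph} (hC : MemC n H) {v w : ℕ}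
    (ha : (v, w) ∈ H.A) {x y : ℕ} (hx : x ∈ H.interval v w) (hy : y ∈ H.interval v w) :
    x = y ∨ (x, y) ∈ H.A ∨ (y, x) ∈ H.A := by
  obtain ⟨q, hq, hmemq⟩ := hC.2.2 (v, w) ha
  have hpw := poset_path_pairwise hC.1 hq
  have hx' : x ∈ q := (hmemq x).2 hx
  have hy' : y ∈ q := (hmemq y).2 hy
  rcases pairwise_comparable hpw hx' hy' with h | h | h
  · exact Or.inl h
  · exact Or.inr (Or.inl h.1)
  · exact Or.inr (Or.inr h.1)

lemma interval_ord {n : ℕ} {H : Dgraph} (hC : MemC n H) {v w : ℕ}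
    (ha : (v, w) ∈ H.A) {x y : ℕ} (hx : x ∈ H.interval v w) (hy : y ∈ H.interval v w)
    (hr : rho H x ≤ rho H y) : (x, y) ∈ H.A := by
  have hTa := poset_memTa hC.1
  rcases interval_comparable hC ha hx hy with h | h | h
  · subst h; exact hC.1.1 x (interval_subset_V hx)
  · exact h
  · by_cases hxy : x = y
    · subst hxy; exact hC.1.1 x (interval_subset_V hx)
    · have := rho_arc_lt hTa h (fun he => hxy he.symm)
      omega

lemma interval_rho_unique {n : ℕ} {H : Dgraph} (hC : MemC n H) {v w : ℕ}
    (ha : (v, w) ∈ H.A) {x y : ℕ} (hx : x ∈ H.interval v w) (hy : y ∈ H.interval v w)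
    (hr : rho H x = rho H y) : x = y := by
  have hTa := poset_memTa hC.1
  rcases interval_comparable hC ha hx hy with h | h | h
  · exact h
  · by_contra hne; have := rho_arc_lt hTa h hne; omega
  · by_contra hne; have := rho_arc_lt hTa h (fun he => hne he.symm); omega

lemma interval_rho_bounds {H : Dgraph} (hTa : H.MemTa) {v w x : ℕ}
    (hx : x ∈ H.interval v w) : rho H v ≤ rho H x ∧ rho H x ≤ rho H w :=
  ⟨rho_mono hTa (mem_interval.1 hx).2.1, rho_mono hTa (mem_interval.1 hx).2.2⟩

lemma iota_refl {H : Dgraph} (hpo : H.IsPoset) {x : ℕ} (hx : x ∈ H.V) :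
    H.iota x x = 1 := by
  have : H.interval x x = {x} := by
    ext z
    simp only [mem_interval, Finset.mem_singleton]
    constructor
    · rintro ⟨hz, h1, h2⟩; exact hpo.2.1 z x h2 h1
    · rintro rfl; exact ⟨hx, hpo.1 z hx, hpo.1 z hx⟩
  rw [Dgraph.iota, this, Finset.card_singleton]

lemma iota_cover {n : ℕ} {H : Dgraph} (hC : MemC n H) {v w : ℕ}
    (ha : (v, w) ∈ H.A) (hne : v ≠ w) (hr : rho H w = rho H v + 1) :
    H.iota v w = 2 := by
  have hTa := poset_memTa hC.1
  have : H.interval v w = {v, w} := by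
    ext z
    constructor
    · intro hz
      obtain ⟨h1, h2⟩ := interval_rho_bounds hTa hz
      simp only [Finset.mem_insert, Finset.mem_singleton]
      rcases Nat.lt_or_ge (rho H z) (rho H w) with h | h
      · exact Or.inl (interval_rho_unique hC ha hz (interval_mem_left hC.1 ha) (by omega))
      · exact Or.inr (interval_rho_unique hC ha hz (interval_mem_right hC.1 ha) (by omega))
    · intro hz
      simp only [Finset.mem_insert, Finset.mem_singleton] at hz
      rcases hz with rfl | rfl
      · exact interval_mem_left hC.1 ha
      · exact interval_mem_right hC.1 ha
  rw [Dgraph.iota, this, Finset.card_insert_of_notMem (by simpa using hne),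
    Finset.card_singleton]

lemma rank_card_le {n : ℕ} {H : Dgraph} (hC : MemC n H) (S : Finset ℕ)
    (hcomp : ∀ x ∈ S, ∀ y ∈ S, x = y ∨ (x, y) ∈ H.A ∨ (y, x) ∈ H.A)
    (lo hi : ℕ) (hr : ∀ x ∈ S, rho H x ∈ Finset.Icc lo hi) :
    S.card ≤ hi + 1 - lo := by
  have hTa := poset_memTa hC.1
  have hinj : Set.InjOn (rho H) S := by
    intro x hx y hy hxy
    rcases hcomp x (by simpa using hx) y (by simpa using hy) with h | h | h
    · exact h
    · by_contra hne; have := rho_arc_lt hTa h hne; omega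
    · by_contra hne; have := rho_arc_lt hTa h (fun he => hne he.symm); omega
  have h1 : (S.image (rho H)).card = S.card := Finset.card_image_of_injOn hinj
  have h2 : S.image (rho H) ⊆ Finset.Icc lo hi := by
    intro k hk
    obtain ⟨x, hx, rfl⟩ := Finset.mem_image.1 hk
    exact hr x hx
  have := Finset.card_le_card h2
  rw [h1, Nat.card_Icc] at this
  omega

lemma interval_rank_surj {n : ℕ} {H : Dgraph} (hC : MemC n H) {v w : ℕ}
    (ha : (v, w) ∈ H.A) (hne : v ≠ w) {k : ℕ} (hk1 : rho H v ≤ k) (hk2 : k ≤ rho H w) :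
    ∃ x ∈ H.interval v w, rho H x = k := by
  classical
  have hTa := poset_memTa hC.1
  have hvV : v ∈ H.V := (H.A_sub _ ha).1
  have hwV : w ∈ H.V := (H.A_sub _ ha).2
  -- a maximal path through v and w
  have hvw : H.IsPath [v, w] := ⟨by simp, by simp [hne], by
      intro z hz; simp at hz; rcases hz with rfl | rfl <;> assumption, List.isChain_pair.2 ha⟩
  obtain ⟨M, hM, hvwM⟩ := exists_maximal_path hvw
  have hMlen : M.length = n + 1 := hC.2.1 M hM
  have hMpw := poset_path_pairwise hC.1 hM.1
  have hvM : v ∈ M := hvwM v (by simp)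
  have hwM : w ∈ M := hvwM w (by simp)
  have hMcomp : ∀ x ∈ M.toFinset, ∀ y ∈ M.toFinset, x = y ∨ (x, y) ∈ H.A ∨ (y, x) ∈ H.A := by
    intro x hx y hy
    rcases pairwise_comparable hMpw (List.mem_toFinset.1 hx) (List.mem_toFinset.1 hy)
      with h | h | h
    · exact Or.inl h
    · exact Or.inr (Or.inl h.1)
    · exact Or.inr (Or.inr h.1)
  set F1 : Finset ℕ := M.toFinset.filter (fun m => (m, v) ∈ H.A) with hF1
  set F3 : Finset ℕ := M.toFinset.filter (fun m => (w, m) ∈ H.A ∧ m ≠ w) with hF3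
  set F2 : Finset ℕ := M.toFinset \ (F1 ∪ F3) with hF2
  have hMsub : M.toFinset ⊆ (F1 ∪ F3) ∪ F2 := by
    intro m hm
    by_cases h : m ∈ F1 ∪ F3
    · exact Finset.mem_union_left _ h
    · exact Finset.mem_union_right _ (Finset.mem_sdiff.2 ⟨hm, h⟩)
  have hcard1 : F1.card ≤ rho H v + 1 := by
    have := rank_card_le hC F1
      (fun x hx y hy => hMcomp x (Finset.filter_subset _ _ hx) y (Finset.filter_subset _ _ hy))
      0 (rho H v) (fun x hx => by
        simp only [Finset.mem_Icc]
        exact ⟨Nat.zero_le _, rho_mono hTa (Finset.mem_filter.1 hx).2⟩)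
    omega
  have hcard3 : F3.card ≤ n - rho H w := by
    have := rank_card_le hC F3
      (fun x hx y hy => hMcomp x (Finset.filter_subset _ _ hx) y (Finset.filter_subset _ _ hy))
      (rho H w + 1) n (fun x hx => by
        obtain ⟨hxM, hxw, hxne⟩ := Finset.mem_filter.1 hx
        simp only [Finset.mem_Icc]
        constructor
        · exact rho_arc_lt hTa hxw (fun he => hxne he.symm)
        · exact memC_rho_le hC (hM.1.2.2.1 x (List.mem_toFinset.1 hxM)))
    have hwn : rho H w ≤ n := memC_rho_le hC hwV
    omega
  have hF2sub : ∀ m ∈ F2, m ∈ H.interval v w ∧ m ≠ v := by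
    intro m hm
    obtain ⟨hmM, hmn⟩ := Finset.mem_sdiff.1 hm
    rw [Finset.mem_union] at hmn
    push_neg at hmn
    obtain ⟨hn1, hn3⟩ := hmn
    have hnmv : (m, v) ∉ H.A := fun h => hn1 (Finset.mem_filter.2 ⟨hmM, h⟩)
    have hvm : (v, m) ∈ H.A := by
      rcases hMcomp m hmM v (List.mem_toFinset.2 hvM) with h | h | h
      · subst h; exact absurd (hC.1.1 m (hM.1.2.2.1 m (List.mem_toFinset.1 hmM))) hnmv
      · exact absurd h hnmv
      · exact h
    have hmw : (m, w) ∈ H.A := by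
      rcases hMcomp m hmM w (List.mem_toFinset.2 hwM) with h | h | h
      · subst h; exact hC.1.1 m (hM.1.2.2.1 m (List.mem_toFinset.1 hmM))
      · exact h
      · by_cases hmw' : m = w
        · subst hmw'; exact hC.1.1 m (hM.1.2.2.1 m (List.mem_toFinset.1 hmM))
        · exact absurd (Finset.mem_filter.2 ⟨hmM, h, hmw'⟩) hn3
    refine ⟨mem_interval.2 ⟨hM.1.2.2.1 m (List.mem_toFinset.1 hmM), hvm, hmw⟩, ?_⟩
    intro he; subst he
    exact hnmv (hC.1.1 m (hM.1.2.2.1 m (List.mem_toFinset.1 hmM)))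
  have hins : insert v F2 ⊆ H.interval v w := by
    intro m hm
    rcases Finset.mem_insert.1 hm with rfl | hm'
    · exact interval_mem_left hC.1 ha
    · exact (hF2sub m hm').1
  have hvF2 : v ∉ F2 := fun h => (hF2sub v h).2 rfl
  have hcardint : F2.card + 1 ≤ (H.interval v w).card := by
    have := Finset.card_le_card hins
    rwa [Finset.card_insert_of_notMem hvF2] at this
  have hMcard : M.toFinset.card = n + 1 := by
    rw [List.toFinset_card_of_nodup hM.1.2.1, hMlen]
  have htot : n + 1 ≤ F1.card + F3.card + F2.card := by
    have h1 := Finset.card_le_card hMsub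
    have h2 := Finset.card_union_le (F1 ∪ F3) F2
    have h3 := Finset.card_union_le F1 F3
    omega
  have hrvw : rho H v < rho H w := rho_arc_lt hTa ha hne
  have hwn : rho H w ≤ n := memC_rho_le hC hwV
  have hintcard : rho H w - rho H v + 1 ≤ (H.interval v w).card := by omega
  -- now the image of rho on the interval is all of Icc
  have hinj : Set.InjOn (rho H) (H.interval v w) := by
    intro x hx y hy hxy
    exact interval_rho_unique hC ha (by simpa using hx) (by simpa using hy) hxy
  have himg : (H.interval v w).image (rho H) ⊆ Finset.Icc (rho H v) (rho H w) := by
    intro j hj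
    obtain ⟨x, hx, rfl⟩ := Finset.mem_image.1 hj
    obtain ⟨h1, h2⟩ := interval_rho_bounds hTa hx
    simp only [Finset.mem_Icc]; exact ⟨h1, h2⟩
  have hcardimg : (H.interval v w).image (rho H) = Finset.Icc (rho H v) (rho H w) := by
    refine Finset.eq_of_subset_of_card_le himg ?_
    rw [Finset.card_image_of_injOn hinj, Nat.card_Icc]
    omega
  have : k ∈ (H.interval v w).image (rho H) := by
    rw [hcardimg]; simp only [Finset.mem_Icc]; exact ⟨hk1, hk2⟩
  obtain ⟨x, hx, hxk⟩ := Finset.mem_image.1 this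
  exact ⟨x, hx, hxk⟩

/-- the element of the chain `[a,b]` at a given rank -/
noncomputable def chainElt (H : Dgraph) (a b k : ℕ) : ℕ :=
  if h : ((H.interval a b).filter (fun x => rho H x = k)).Nonempty then
    ((H.interval a b).filter (fun x => rho H x = k)).min' h
  else 0

lemma chainElt_spec {n : ℕ} {H : Dgraph} (hC : MemC n H) {a b : ℕ}
    (ha : (a, b) ∈ H.A) (hne : a ≠ b) {k : ℕ} (hk1 : rho H a ≤ k) (hk2 : k ≤ rho H b) :
    chainElt H a b k ∈ H.interval a b ∧ rho H (chainElt H a b k) = k := by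
  obtain ⟨x, hx, hxk⟩ := interval_rank_surj hC ha hne hk1 hk2
  have hne' : ((H.interval a b).filter (fun x => rho H x = k)).Nonempty :=
    ⟨x, Finset.mem_filter.2 ⟨hx, hxk⟩⟩
  rw [chainElt, dif_pos hne']
  have := Finset.min'_mem _ hne'
  exact ⟨(Finset.mem_filter.1 this).1, (Finset.mem_filter.1 this).2⟩

lemma chainElt_unique {n : ℕ} {H : Dgraph} (hC : MemC n H) {a b : ℕ}
    (ha : (a, b) ∈ H.A) (hne : a ≠ b) {k : ℕ} {x : ℕ} (hx : x ∈ H.interval a b)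
    (hxk : rho H x = k) : x = chainElt H a b k := by
  have hb := interval_rho_bounds (poset_memTa hC.1) hx
  have hspec := chainElt_spec hC ha hne (k := k) (by omega) (by omega)
  exact interval_rho_unique hC ha hx hspec.1 (by rw [hxk, hspec.2])

end StrictCount
namespace StrictCount
open Dgraph

/-! ### squeeze lemma -/

lemma add_steps {g : ℕ → ℕ} {m : ℕ} (h1 : ∀ j, j < m → g j + 1 ≤ g (j + 1)) :
    ∀ (d i : ℕ), i + d ≤ m → g i + d ≤ g (i + d) := by
  intro d
  induction d with
  | zero => intro i _; simp
  | succ k ih =>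
    intro i h
    have hik := ih i (by omega)
    have h2 := h1 (i + k) (by omega)
    have he : i + (k + 1) = (i + k) + 1 := by omega
    rw [he]
    omega

lemma squeeze {g : ℕ → ℕ} {m : ℕ} (h1 : ∀ j, j < m → g j + 1 ≤ g (j + 1))
    (h2 : g m ≤ m) {i : ℕ} (hi : i ≤ m) : g i = i := by
  have ha := add_steps h1 i 0 (by omega)
  have hb := add_steps h1 (m - i) i (by omega)
  simp only [Nat.zero_add] at ha
  have : i + (m - i) = m := by omega
  rw [this] at hb
  omega

/-! ### ranks along longest paths -/

lemma longpath_rho {G : Dgraph} (hTa : G.MemTa) {P : List ℕ} (hP : G.IsPath P)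
    (hlen : P.length = G.height + 1) {i : ℕ} (hi : i < P.length) :
    rho G P[i] = i := by
  set g : ℕ → ℕ := fun j => rho G (P.getD j 0) with hg
  have h1 : ∀ j, j < G.height → g j + 1 ≤ g (j + 1) := by
    intro j hj
    have hj1 : j + 1 < P.length := by omega
    have hj0 : j < P.length := by omega
    have harc := chain'_getElem hP.2.2.2 hj1
    have hne := nodup_getElem_ne hP.2.1 hj0 hj1 (by omega)
    have hlt := rho_arc_lt hTa harc hne
    have e1 : g j = rho G (P[j]'hj0) := by simp [hg, List.getElem?_eq_getElem hj0]
    have e2 : g (j + 1) = rho G (P[j + 1]'hj1) := by simp [hg, List.getElem?_eq_getElem hj1]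
    omega
  have hht : G.height < P.length := by omega
  have h2 : g G.height ≤ G.height := by
    have e : g G.height = rho G (P[G.height]'hht) := by
      simp [hg, List.getElem?_eq_getElem hht]
    have := rho_le_height (hP.2.2.1 _ (List.getElem_mem hht))
    omega
  have hs := squeeze h1 h2 (i := i) (by omega)
  have e : g i = rho G (P[i]'hi) := by simp [hg, List.getElem?_eq_getElem hi]
  omega

/-! ### TransGen rank facts -/

lemma transGen_rho {G : Dgraph} (hTa : G.MemTa) {x y : ℕ}
    (h : Relation.TransGen (fun a c => (a, c) ∈ G.A) x y) :
    x = y ∨ rho G x < rho G y := by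
  induction h with
  | @single b h =>
    by_cases hxy : x = b
    · exact Or.inl hxy
    · exact Or.inr (rho_arc_lt hTa h hxy)
  | @tail b c h1 h2 ih =>
    by_cases hbc : b = c
    · subst hbc; exact ih
    · have hlt := rho_arc_lt hTa h2 hbc
      rcases ih with rfl | ih'
      · exact Or.inr hlt
      · exact Or.inr (by omega)

lemma transGen_rho_le {G : Dgraph} (hTa : G.MemTa) {x y : ℕ}
    (h : Relation.TransGen (fun a c => (a, c) ∈ G.A) x y) : rho G x ≤ rho G y := by
  rcases transGen_rho hTa h with rfl | h' <;> omega

lemma transGen_prop_rho {G : Dgraph} (hTa : G.MemTa) {x y : ℕ}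
    (h : Relation.TransGen (fun a c => (a, c) ∈ G.A ∧ a ≠ c) x y) :
    rho G x < rho G y := by
  induction h with
  | single h => exact rho_arc_lt hTa h.1 h.2
  | tail h1 h2 ih => exact lt_trans ih (rho_arc_lt hTa h2.1 h2.2)

/-! ### spanning proper arcs by `G_×`-paths -/

lemma chain_transGen_prop {G : Dgraph} {l : List ℕ}
    (h : l.Chain' (fun a c => (a, c) ∈ G.A ∧ a ≠ c)) :
    ∀ (j i : ℕ) (hij : i < j) (hj : j < l.length),
      Relation.TransGen (fun a c => (a, c) ∈ G.A ∧ a ≠ c) (l[i]'(by omega)) l[j] := by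
  have h' : l.Chain' (Relation.TransGen (fun a c => (a, c) ∈ G.A ∧ a ≠ c)) :=
    List.IsChain.imp (fun _ _ hab => Relation.TransGen.single hab) h
  exact chain'_rel_of_lt
    (R := Relation.TransGen (fun a c => (a, c) ∈ G.A ∧ a ≠ c))
    (fun _ _ _ hab hbc => hab.trans hbc) h'

lemma span_aux {G : Dgraph} (hTa : G.MemTa) :
    ∀ gap : ℕ, ∀ v w : ℕ, (v, w) ∈ G.A → v ≠ w → rho G w ≤ rho G v + gap →
      Relation.TransGen (RdArc G) v w := by
  intro gap
  induction gap using Nat.strong_induction_on with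
  | _ gap IH =>
    intro v w ha hne hgap
    by_cases hrd : RdArc G v w
    · exact Relation.TransGen.single hrd
    · have hex : ∃ q : List ℕ, G.IsPathStar q ∧ 3 ≤ q.length ∧
          q.head? = some v ∧ q.getLast? = some w := by
        rw [RdArc] at hrd
        push_neg at hrd
        exact hrd ha hne
      obtain ⟨q, hq, hlen3, hqh, hql⟩ := hex
      obtain ⟨h0, hq0⟩ := head?_getElem hqh
      obtain ⟨hl0, hqlast⟩ := getLast?_getElem hql
      have hrvw : rho G v < rho G w := rho_arc_lt hTa ha hne
      have hgap1 : 1 ≤ gap := by omega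
      -- the second vertex x
      have h1q : 1 < q.length := by omega
      set x := q[1] with hx
      have harcvx : (v, x) ∈ G.A ∧ v ≠ x := by
        have := chain'_getElem hq.2.2.2 (by omega : 0 + 1 < q.length)
        rwa [hq0] at this
      have htgxw : Relation.TransGen (fun a c => (a, c) ∈ G.A ∧ a ≠ c) x w := by
        have := chain_transGen_prop hq.2.2.2 (q.length - 1) 1 (by omega) (by omega)
        rwa [hqlast] at this
      have hrxw : rho G x < rho G w := transGen_prop_rho hTa htgxw
      have hrvx : rho G v < rho G x := rho_arc_lt hTa harcvx.1 harcvx.2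
      -- v → x
      have hvx : Relation.TransGen (RdArc G) v x :=
        IH (gap - 1) (by omega) v x harcvx.1 harcvx.2 (by omega)
      -- x → w : lift the TransGen
      have hlift : ∀ b c : ℕ, Relation.TransGen (fun a e => (a, e) ∈ G.A ∧ a ≠ e) b c →
          rho G v < rho G b → rho G c ≤ rho G w → Relation.TransGen (RdArc G) b c := by
        intro b c htg
        induction htg with
        | single hbc =>
          intro hb hc
          exact IH (gap - 1) (by omega) _ _ hbc.1 hbc.2 (by omega)
        | @tail b' c' h1 h2 ih =>
          intro hb hc
          have hb'r : rho G b ≤ rho G b' := le_of_lt (transGen_prop_rho hTa h1)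
          have hc'r : rho G b' < rho G c' := rho_arc_lt hTa h2.1 h2.2
          exact Relation.TransGen.trans (ih hb (by omega))
            (IH (gap - 1) (by omega) _ _ h2.1 h2.2 (by omega))
      exact Relation.TransGen.trans hvx (hlift x w htgxw hrvx (le_refl _))

lemma span {G : Dgraph} (hTa : G.MemTa) {v w : ℕ} (ha : (v, w) ∈ G.A) (hne : v ≠ w) :
    Relation.TransGen (RdArc G) v w :=
  span_aux hTa (rho G w) v w ha hne (by omega)

lemma rdArc_arc {G : Dgraph} {v w : ℕ} (h : RdArc G v w) : (v, w) ∈ G.A := h.1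
lemma rdArc_ne {G : Dgraph} {v w : ℕ} (h : RdArc G v w) : v ≠ w := h.2.1

end StrictCount
namespace StrictCount
open Dgraph

/-! ### `Vh`, `Vmh`, components -/

lemma vh_sub_V {G : Dgraph} {v : ℕ} (h : v ∈ Vh G) : v ∈ G.V := by
  obtain ⟨p, hp, _, hv⟩ := h
  exact hp.2.2.1 v hv

lemma vmh_sub_V {G : Dgraph} {v : ℕ} (h : v ∈ Vmh G) : v ∈ G.V := h.1

lemma vh_not_vmh {G : Dgraph} {v : ℕ} (h : v ∈ Vh G) : v ∉ Vmh G := fun h' => h'.2 h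

lemma v_cases {G : Dgraph} {v : ℕ} (h : v ∈ G.V) : v ∈ Vh G ∨ v ∈ Vmh G := by
  by_cases h' : v ∈ Vh G
  · exact Or.inl h'
  · exact Or.inr ⟨h, h'⟩

lemma not_vmh_in_V {G : Dgraph} {v : ℕ} (hv : v ∈ G.V) (h : v ∉ Vmh G) : v ∈ Vh G := by
  rcases v_cases hv with h' | h'
  · exact h'
  · exact absurd h' h

def compt (G : Dgraph) (z : ℕ) : Set ℕ :=
  {w | w ∈ Vmh G ∧ Relation.ReflTransGen (adjx G) z w}

lemma adjx_symm {G : Dgraph} : Symmetric (adjx G) :=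
  fun _ _ h => ⟨h.1.symm, h.2.2, h.2.1⟩

lemma compt_self {G : Dgraph} {z : ℕ} (hz : z ∈ Vmh G) : z ∈ compt G z :=
  ⟨hz, Relation.ReflTransGen.refl⟩

lemma compt_sub_vmh {G : Dgraph} {z w : ℕ} (h : w ∈ compt G z) : w ∈ Vmh G := h.1

lemma compt_eq {G : Dgraph} {z w : ℕ} (h : w ∈ compt G z) : compt G w = compt G z := by
  obtain ⟨hw, hzw⟩ := h
  have hsym : ∀ {a b : ℕ}, Relation.ReflTransGen (adjx G) a b →
      Relation.ReflTransGen (adjx G) b a := by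
    intro a b h
    induction h with
    | refl => exact Relation.ReflTransGen.refl
    | tail _ hbc ih => exact Relation.ReflTransGen.head (adjx_symm hbc) ih
  ext u
  constructor
  · rintro ⟨hu, hwu⟩
    exact ⟨hu, hzw.trans hwu⟩
  · rintro ⟨hu, hzu⟩
    exact ⟨hu, (hsym hzw).trans hzu⟩

lemma compt_arc {G : Dgraph} {z w v : ℕ} (hw : w ∈ compt G z) (hv : v ∈ Vmh G)
    (h : RdArc G v w ∨ RdArc G w v) : v ∈ compt G z :=
  ⟨hv, hw.2.tail ⟨h.symm, hw.1, hv⟩⟩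

/-! ### choice of interval endpoints for components -/

def GoodBU (G : Dgraph) (Z : Set ℕ) (b u : ℕ) : Prop :=
  b ∈ Vh G ∧ u ∈ Vh G ∧ ∀ z ∈ Z,
    z ∈ trInterval G b u ∧ (∀ v, RdArc G v z → v ∈ trInterval G b u) ∧
    (∀ v, RdArc G z v → v ∈ trInterval G b u)

open scoped Classical in
noncomputable def buf (G : Dgraph) (Z : Set ℕ) : ℕ × ℕ :=
  if h : ∃ p : ℕ × ℕ, GoodBU G Z p.1 p.2 then h.choose else (0, 0)

noncomputable def bz (G : Dgraph) (z : ℕ) : ℕ := (buf G (compt G z)).1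
noncomputable def uz (G : Dgraph) (z : ℕ) : ℕ := (buf G (compt G z)).2

lemma bz_const {G : Dgraph} {z w : ℕ} (h : w ∈ compt G z) :
    bz G w = bz G z ∧ uz G w = uz G z := by
  rw [bz, uz, bz, uz, compt_eq h]
  exact ⟨rfl, rfl⟩

lemma good_exists {n : ℕ} {G : Dgraph} (hG : MemTaApprox n G) {z : ℕ} (hz : z ∈ Vmh G) :
    GoodBU G (compt G z) (bz G z) (uz G z) := by
  obtain ⟨hTa, hh, B, U, hBU, hZ⟩ := hG
  obtain ⟨b, hb, u, hu, hsub⟩ := hZ (compt G z) ⟨z, hz, rfl⟩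
  have hgood : GoodBU G (compt G z) b u := by
    refine ⟨hb, hu, fun w hw => ?_⟩
    have hwVmh : w ∈ Vmh G := hw.1
    refine ⟨hsub (Or.inl (Or.inr hw)), ?_, ?_⟩
    · intro v hrd
      have hvV : v ∈ G.V := (G.A_sub _ hrd.1).1
      rcases v_cases hvV with hvVh | hvVmh
      · -- v lies on a long path: it is in the bottom shell of w
        have hshell := (hBU w hwVmh).1
        have hpx : IsPathx G [v, w] := by
          refine ⟨by simp, by simp [hrd.2.1], ?_, List.isChain_pair.2 hrd⟩
          intro x hx
          simp at hx
          rcases hx with rfl | rfl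
          · exact hvV
          · exact (G.A_sub _ hrd.1).2
        obtain ⟨x, hxB, hxp⟩ := hshell.2.2 [v, w] hpx ⟨v, hvVh, by simp⟩ (by simp)
        have hxVh : x ∈ Vh G := hshell.1 hxB
        have hxv : x = v := by
          simp at hxp
          rcases hxp with rfl | rfl
          · rfl
          · exact absurd hxVh (fun hc => hwVmh.2 hc)
        subst hxv
        exact hsub (Or.inl (Or.inl (Set.mem_biUnion hw hxB)))
      · exact hsub (Or.inl (Or.inr (compt_arc hw hvVmh (Or.inl hrd))))
    · intro v hrd
      have hvV : v ∈ G.V := (G.A_sub _ hrd.1).2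
      rcases v_cases hvV with hvVh | hvVmh
      · have hshell := (hBU w hwVmh).2
        have hpx : IsPathx G [w, v] := by
          refine ⟨by simp, by simp [hrd.2.1], ?_, List.isChain_pair.2 hrd⟩
          intro x hx
          simp at hx
          rcases hx with rfl | rfl
          · exact (G.A_sub _ hrd.1).1
          · exact hvV
        obtain ⟨x, hxU, hxp⟩ := hshell.2.2 [w, v] hpx (by simp) ⟨v, hvVh, by simp⟩
        have hxVh : x ∈ Vh G := hshell.1 hxU
        have hxv : x = v := by
          simp at hxp
          rcases hxp with rfl | rfl
          · exact absurd hxVh (fun hc => hwVmh.2 hc)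
          · rfl
        subst hxv
        exact hsub (Or.inr (Set.mem_biUnion hw hxU))
      · exact hsub (Or.inl (Or.inr (compt_arc hw hvVmh (Or.inr hrd))))
  have hex : ∃ p : ℕ × ℕ, GoodBU G (compt G z) p.1 p.2 := ⟨(b, u), hgood⟩
  have : buf G (compt G z) = hex.choose := by rw [buf, dif_pos hex]
  rw [bz, uz, this]
  exact hex.choose_spec

/-! ### the `G`-side rank constraint sets -/

open scoped Classical in
noncomputable def Rset (G : Dgraph) : Set (ℕ → ℕ) :=
  {r | (∀ z, z ∉ Vmh G → r z = 0) ∧ ∀ z ∈ Vmh G,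
    (rho G (bz G z) ≤ r z ∧ r z ≤ rho G (uz G z)) ∧
    (∀ v, RdArc G v z → v ∈ Vh G → rho G v ≤ r z) ∧
    (∀ v, RdArc G z v → v ∈ Vh G → r z ≤ rho G v) ∧
    (∀ v, RdArc G z v → v ∈ Vmh G → r z ≤ r v)}

noncomputable def Sset (G : Dgraph) : Set (ℕ → ℕ) :=
  {r | r ∈ Rset G ∧ ∀ z ∈ Vmh G,
    (∀ v, RdArc G v z → v ∈ Vh G → rho G v ≠ r z) ∧
    (∀ v, RdArc G z v → v ∈ Vh G → r z ≠ rho G v) ∧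
    (∀ v, RdArc G z v → v ∈ Vmh G → r z ≠ r v)}

lemma sset_sub_rset {G : Dgraph} : Sset G ⊆ Rset G := fun _ h => h.1

/-! ### trInterval rank facts -/

lemma trInterval_rho {G : Dgraph} (hTa : G.MemTa) {b u x : ℕ}
    (h : x ∈ trInterval G b u) : rho G b ≤ rho G x ∧ rho G x ≤ rho G u :=
  ⟨transGen_rho_le hTa h.1, transGen_rho_le hTa h.2⟩

lemma trInterval_rho_strict {G : Dgraph} (hTa : G.MemTa) {b u x : ℕ}
    (h : x ∈ trInterval G b u) (h1 : x ≠ b) (h2 : x ≠ u) :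
    rho G b < rho G x ∧ rho G x < rho G u := by
  constructor
  · rcases transGen_rho hTa h.1 with he | h' : _ ∨ _
    · exact absurd he.symm h1
    · exact h'
  · rcases transGen_rho hTa h.2 with he | h' : _ ∨ _
    · exact absurd he h2
    · exact h'

end StrictCount
namespace StrictCount
open Dgraph

lemma hom_mem_V {G H : Dgraph} {ξ : ℕ → ℕ} (h : ξ ∈ Hom G H) {v : ℕ} (hv : v ∈ G.V) :
    ξ v ∈ H.V := h.1 v hv

lemma hom_arc {G H : Dgraph} {ξ : ℕ → ℕ} (h : ξ ∈ Hom G H) {v w : ℕ}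
    (hvw : (v, w) ∈ G.A) : (ξ v, ξ w) ∈ H.A := h.2.1 (v, w) hvw

lemma hom_transGen {G H : Dgraph} (hpo : H.IsPoset) {ξ : ℕ → ℕ} (h : ξ ∈ Hom G H)
    {x y : ℕ} (htg : Relation.TransGen (fun a c => (a, c) ∈ G.A) x y) :
    (ξ x, ξ y) ∈ H.A := by
  induction htg with
  | @single b hb => exact hom_arc h hb
  | @tail b c h1 h2 ih => exact hpo.2.2 _ _ _ ih (hom_arc h h2)

lemma shom_strict {G H : Dgraph} {σ : ℕ → ℕ} (h : σ ∈ SHom G H) {v w : ℕ}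
    (hvw : (v, w) ∈ G.A) (hne : v ≠ w) : σ v ≠ σ w :=
  h.2 (v, w) (Finset.mem_filter.2 ⟨hvw, hne⟩)

/-- squeeze ranks along a longest path of `G` mapped into `H` -/
lemma hom_path_rank {n : ℕ} {G H : Dgraph} (hC : MemC n H)
    {ξ : ℕ → ℕ} (hξ : ξ ∈ Hom G H) {P : List ℕ} (hP : G.IsPath P)
    (hlen : P.length = n + 1)
    (hstep : ∀ (j : ℕ) (hj : j + 1 < P.length), ξ (P[j]'(by omega)) ≠ ξ P[j + 1]) :
    ∀ (i : ℕ) (hi : i < P.length), rho H (ξ P[i]) = i := by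
  intro i hi
  have hTaH := poset_memTa hC.1
  set g : ℕ → ℕ := fun j => rho H (ξ (P.getD j 0)) with hg
  have h1 : ∀ j, j < n → g j + 1 ≤ g (j + 1) := by
    intro j hj
    have hj1 : j + 1 < P.length := by omega
    have hj0 : j < P.length := by omega
    have harc := hom_arc hξ (chain'_getElem hP.2.2.2 hj1)
    have hlt := rho_arc_lt hTaH harc (hstep j hj1)
    have e1 : g j = rho H (ξ (P[j]'hj0)) := by simp [hg, List.getElem?_eq_getElem hj0]
    have e2 : g (j + 1) = rho H (ξ (P[j + 1]'hj1)) := by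
      simp [hg, List.getElem?_eq_getElem hj1]
    omega
  have hnt : n < P.length := by omega
  have h2 : g n ≤ n := by
    have e : g n = rho H (ξ (P[n]'hnt)) := by simp [hg, List.getElem?_eq_getElem hnt]
    have := memC_rho_le hC (hom_mem_V hξ (hP.2.2.1 _ (List.getElem_mem hnt)))
    omega
  have hs := squeeze h1 h2 (i := i) (by omega)
  have e : g i = rho H (ξ (P[i]'hi)) := by simp [hg, List.getElem?_eq_getElem hi]
  omega

/-- a strict homomorphism preserves ranks on `V(G)^h` -/
lemma shom_rank {n : ℕ} {G H : Dgraph} (hTaG : G.MemTa) (hh : G.height = n)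
    (hC : MemC n H) {σ : ℕ → ℕ} (hσ : σ ∈ SHom G H) {v : ℕ} (hv : v ∈ Vh G) :
    rho H (σ v) = rho G v := by
  obtain ⟨P, hP, hlen, hvP⟩ := hv
  obtain ⟨i, hi, rfl⟩ := List.mem_iff_getElem.1 hvP
  have hlen' : P.length = n + 1 := by omega
  have hstep : ∀ (j : ℕ) (hj : j + 1 < P.length), σ (P[j]'(by omega)) ≠ σ P[j + 1] := by
    intro j hj
    exact shom_strict hσ (chain'_getElem hP.2.2.2 hj)
      (nodup_getElem_ne hP.2.1 (by omega) hj (by omega))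
  have h1 := hom_path_rank hC hσ.1 hP hlen' hstep i hi
  have h2 := longpath_rho hTaG hP (by omega) hi
  rw [h1, h2]

lemma pathGraph_astar_iff {P : List ℕ} (hne : P ≠ []) (hnd : P.Nodup) {p : ℕ × ℕ} :
    p ∈ (Dgraph.pathGraph P hne).Astar ↔
      ∃ (i : ℕ) (hi : i + 1 < P.length), p = (P[i]'(by omega), P[i + 1]) := by
  have hzlen : (P.zip P.tail).length = P.length - 1 := by
    simp [List.length_zip]
  constructor
  · intro hp
    obtain ⟨hpA, hpne⟩ := Finset.mem_filter.1 hp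
    have : p ∈ P.zip P.tail := List.mem_toFinset.1 hpA
    obtain ⟨i, hi, hp'⟩ := List.mem_iff_getElem.1 this
    have hi1 : i + 1 < P.length := by omega
    refine ⟨i, hi1, ?_⟩
    rw [← hp', List.getElem_zip, List.getElem_tail]
  · rintro ⟨i, hi, rfl⟩
    refine Finset.mem_filter.2 ⟨?_, ?_⟩
    · apply List.mem_toFinset.2
      have hi' : i < (P.zip P.tail).length := by omega
      have : (P.zip P.tail)[i] = (P[i]'(by omega), P[i + 1]) := by
        rw [List.getElem_zip, List.getElem_tail]
      rw [← this]
      exact List.getElem_mem hi'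
    · exact nodup_getElem_ne hnd (by omega) hi (by omega)

lemma mem_LSet {G : Dgraph} {P : List ℕ} (hP : G.IsPath P)
    (hlen : P.length = G.height + 1) :
    Dgraph.pathGraph P hP.1 ∈ LSet G := ⟨P, hP.1, hP, hlen, rfl⟩

/-- characterization of `𝓙` via ranks -/
lemma jchar {n : ℕ} {G H : Dgraph} (hTaG : G.MemTa) (hh : G.height = n)
    (hC : MemC n H) {σ : ℕ → ℕ} (hσ : σ ∈ SHom G H) {ζ : ℕ → ℕ} :
    ζ ∈ JSet G H H (LSet G) σ ↔
      ζ ∈ Hom G H ∧ ∀ v ∈ Vh G, rho H (ζ v) = rho G v := by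
  have hTaH := poset_memTa hC.1
  constructor
  · rintro ⟨hhom, hiota⟩
    refine ⟨hhom, fun v hv => ?_⟩
    obtain ⟨P, hP, hlen, hvP⟩ := hv
    obtain ⟨i, hi, rfl⟩ := List.mem_iff_getElem.1 hvP
    have hlen' : P.length = n + 1 := by omega
    have hL := mem_LSet hP hlen
    have hio : ∀ (j : ℕ) (hj : j + 1 < P.length),
        H.iota (ζ (P[j]'(by omega))) (ζ P[j + 1]) = 2 := by
      intro j hj
      have hje := hiota _ hL (P[j]'(by omega), P[j + 1])
        ((pathGraph_astar_iff hP.1 hP.2.1).2 ⟨j, hj, rfl⟩)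
      have hPjV : P[j]'(by omega) ∈ Vh G := ⟨P, hP, hlen, List.getElem_mem (by omega)⟩
      have hPj1V : P[j + 1] ∈ Vh G := ⟨P, hP, hlen, List.getElem_mem hj⟩
      have hsig : H.iota (σ (P[j]'(by omega))) (σ P[j + 1]) = 2 := by
        apply iota_cover hC
          (hom_arc hσ.1 (chain'_getElem hP.2.2.2 hj))
          (shom_strict hσ (chain'_getElem hP.2.2.2 hj)
            (nodup_getElem_ne hP.2.1 (by omega) hj (by omega)))
        rw [shom_rank hTaG hh hC hσ hPjV, shom_rank hTaG hh hC hσ hPj1V,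
          longpath_rho hTaG hP (by omega) (by omega : j < P.length),
          longpath_rho hTaG hP (by omega) hj]
      rw [hje, hsig]
    have hstep : ∀ (j : ℕ) (hj : j + 1 < P.length), ζ (P[j]'(by omega)) ≠ ζ P[j + 1] := by
      intro j hj heq
      have h2 := hio j hj
      rw [heq] at h2
      have h1 := iota_refl hC.1 (hom_mem_V hhom (hP.2.2.1 _ (List.getElem_mem hj)))
      omega
    have h1 := hom_path_rank hC hhom hP hlen' hstep i hi
    have h2 := longpath_rho hTaG hP (by omega) hi
    rw [h1, h2]
  · rintro ⟨hhom, hrank⟩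
    refine ⟨hhom, fun L hL p hp => ?_⟩
    obtain ⟨P, hne, hP, hlen, rfl⟩ := hL
    obtain ⟨i, hi, rfl⟩ := (pathGraph_astar_iff hne hP.2.1).1 hp
    have hPjV : P[i]'(by omega) ∈ Vh G := ⟨P, hP, hlen, List.getElem_mem (by omega)⟩
    have hPj1V : P[i + 1] ∈ Vh G := ⟨P, hP, hlen, List.getElem_mem hi⟩
    have hri : rho G (P[i]'(by omega)) = i := longpath_rho hTaG hP (by omega) (by omega)
    have hri1 : rho G (P[i + 1]) = i + 1 := longpath_rho hTaG hP (by omega) hi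
    have hζ2 : H.iota (ζ (P[i]'(by omega))) (ζ P[i + 1]) = 2 := by
      apply iota_cover hC (hom_arc hhom (chain'_getElem hP.2.2.2 hi))
      · intro heq
        have e1 := hrank _ hPjV
        have e2 := hrank _ hPj1V
        rw [heq] at e1
        omega
      · have e1 := hrank _ hPjV
        have e2 := hrank _ hPj1V
        omega
    have hσ2 : H.iota (σ (P[i]'(by omega))) (σ P[i + 1]) = 2 := by
      apply iota_cover hC (hom_arc hσ.1 (chain'_getElem hP.2.2.2 hi))
        (shom_strict hσ (chain'_getElem hP.2.2.2 hi)
          (nodup_getElem_ne hP.2.1 (by omega) hi (by omega)))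
      rw [shom_rank hTaG hh hC hσ hPjV, shom_rank hTaG hh hC hσ hPj1V, hri, hri1]
    rw [hζ2, hσ2]

end StrictCount
namespace StrictCount
open Dgraph

open scoped Classical in
noncomputable def surg (G H : Dgraph) (f r : ℕ → ℕ) : ℕ → ℕ :=
  fun v => if v ∈ Vmh G then chainElt H (f (bz G v)) (f (uz G v)) (r v) else f v

open scoped Classical in
noncomputable def rk (G H : Dgraph) (f : ℕ → ℕ) : ℕ → ℕ :=
  fun z => if z ∈ Vmh G then rho H (f z) else 0

section Surgery

variable {n : ℕ} {G H : Dgraph}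

/-- basic facts about the interval endpoints of the component of `z` -/
lemma bu_facts (hG : MemTaApprox n G) {z : ℕ} (hz : z ∈ Vmh G) :
    bz G z ∈ Vh G ∧ uz G z ∈ Vh G ∧ z ∈ trInterval G (bz G z) (uz G z) ∧
      rho G (bz G z) < rho G z ∧ rho G z < rho G (uz G z) := by
  have good := good_exists hG hz
  have htr := (good.2.2 z (compt_self hz)).1
  have hnb : z ≠ bz G z := fun he => (vh_not_vmh (he ▸ good.1)) hz
  have hnu : z ≠ uz G z := fun he => (vh_not_vmh (he ▸ good.2.1)) hz
  have := trInterval_rho_strict hG.1 htr hnb hnu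
  exact ⟨good.1, good.2.1, htr, this.1, this.2⟩

lemma arcH_int (hG : MemTaApprox n G) (hC : MemC n H) {ξ : ℕ → ℕ}
    (hhom : ξ ∈ Hom G H) (hrk : ∀ v ∈ Vh G, rho H (ξ v) = rho G v)
    {z : ℕ} (hz : z ∈ Vmh G) :
    (ξ (bz G z), ξ (uz G z)) ∈ H.A ∧ ξ (bz G z) ≠ ξ (uz G z) ∧
      rho H (ξ (bz G z)) = rho G (bz G z) ∧ rho H (ξ (uz G z)) = rho G (uz G z) ∧
      ξ z ∈ H.interval (ξ (bz G z)) (ξ (uz G z)) := by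
  obtain ⟨hbVh, huVh, htr, hrb, hru⟩ := bu_facts hG hz
  have harc : (ξ (bz G z), ξ (uz G z)) ∈ H.A :=
    hom_transGen hC.1 hhom (htr.1.trans htr.2)
  have hrkb := hrk _ hbVh
  have hrku := hrk _ huVh
  have hne : ξ (bz G z) ≠ ξ (uz G z) := by
    intro he
    rw [he] at hrkb
    omega
  have hmem : ξ z ∈ H.interval (ξ (bz G z)) (ξ (uz G z)) :=
    mem_interval.2 ⟨hom_mem_V hhom (vmh_sub_V hz),
      hom_transGen hC.1 hhom htr.1, hom_transGen hC.1 hhom htr.2⟩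
  exact ⟨harc, hne, hrkb, hrku, hmem⟩

/-- a `Vh`-vertex in the interval maps to the chain element at its rank -/
lemma vh_chainElt (hG : MemTaApprox n G) (hC : MemC n H) {ξ : ℕ → ℕ}
    (hhom : ξ ∈ Hom G H) (hrk : ∀ v ∈ Vh G, rho H (ξ v) = rho G v)
    {z : ℕ} (hz : z ∈ Vmh G) {v : ℕ} (hvVh : v ∈ Vh G)
    (hv : v ∈ trInterval G (bz G z) (uz G z)) :
    ξ v ∈ H.interval (ξ (bz G z)) (ξ (uz G z)) ∧
      ξ v = chainElt H (ξ (bz G z)) (ξ (uz G z)) (rho G v) := by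
  obtain ⟨harc, hne, hrkb, hrku, _⟩ := arcH_int hG hC hhom hrk hz
  have hmem : ξ v ∈ H.interval (ξ (bz G z)) (ξ (uz G z)) :=
    mem_interval.2 ⟨hom_mem_V hhom (vh_sub_V hvVh),
      hom_transGen hC.1 hhom hv.1, hom_transGen hC.1 hhom hv.2⟩
  exact ⟨hmem, chainElt_unique hC harc hne hmem (hrk _ hvVh)⟩

lemma transGen_arcH {G H : Dgraph} (hpo : H.IsPoset) {f : ℕ → ℕ}
    (hcore : ∀ a c, RdArc G a c → (f a, f c) ∈ H.A) {v w : ℕ}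
    (h : Relation.TransGen (RdArc G) v w) : (f v, f w) ∈ H.A := by
  induction h with
  | @single b hb => exact hcore _ _ hb
  | @tail b c h1 h2 ih => exact hpo.2.2 _ _ _ ih (hcore _ _ h2)

/-- the main reconstruction lemma -/
lemma surg_main (hG : MemTaApprox n G) (hC : MemC n H) {ξ r : ℕ → ℕ}
    (hhom : ξ ∈ Hom G H) (hrk : ∀ v ∈ Vh G, rho H (ξ v) = rho G v)
    (hr : r ∈ Rset G) :
    surg G H ξ r ∈ Hom G H ∧ (∀ v, v ∉ Vmh G → surg G H ξ r v = ξ v) ∧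
      ∀ z ∈ Vmh G, rho H (surg G H ξ r z) = r z ∧
        surg G H ξ r z ∈ H.interval (ξ (bz G z)) (ξ (uz G z)) := by
  classical
  have hTaG := hG.1
  have hTaH := poset_memTa hC.1
  set ξ' := surg G H ξ r with hxi
  have hfix : ∀ v, v ∉ Vmh G → ξ' v = ξ v := by
    intro v hv
    simp [hxi, surg, if_neg hv]
  have hval : ∀ z ∈ Vmh G, rho H (ξ' z) = r z ∧
      ξ' z ∈ H.interval (ξ (bz G z)) (ξ (uz G z)) := by
    intro z hz
    obtain ⟨harc, hne, hrkb, hrku, _⟩ := arcH_int hG hC hhom hrk hz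
    have hbd := (hr.2 z hz).1
    have hspec := chainElt_spec hC harc hne (k := r z) (by omega) (by omega)
    have he : ξ' z = chainElt H (ξ (bz G z)) (ξ (uz G z)) (r z) := by
      simp [hxi, surg, if_pos hz]
    rw [he]
    exact ⟨hspec.2, hspec.1⟩
  -- the core: G_×-arcs map to arcs of H
  have hcore : ∀ a c, RdArc G a c → (ξ' a, ξ' c) ∈ H.A := by
    intro a c hac
    have haV : a ∈ G.V := (G.A_sub _ hac.1).1
    have hcV : c ∈ G.V := (G.A_sub _ hac.1).2
    by_cases ha : a ∈ Vmh G <;> by_cases hc : c ∈ Vmh G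
    · -- both in Vmh : same component
      have hccomp : c ∈ compt G a := compt_arc (compt_self ha) hc (Or.inr hac)
      obtain ⟨hbe, hue⟩ := bz_const hccomp
      obtain ⟨harc, hne, hrkb, hrku, _⟩ := arcH_int hG hC hhom hrk ha
      have hva := hval a ha
      have hvc := hval c hc
      rw [hbe, hue] at hvc
      refine interval_ord hC harc hva.2 hvc.2 ?_
      rw [hva.1, hvc.1]
      exact (hr.2 a ha).2.2.2 c hac hc
    · -- a ∈ Vmh, c ∈ Vh
      have hcVh : c ∈ Vh G := not_vmh_in_V hcV hc
      have good := good_exists hG ha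
      have hcint : c ∈ trInterval G (bz G a) (uz G a) :=
        (good.2.2 a (compt_self ha)).2.2 c hac
      obtain ⟨harc, hne, hrkb, hrku, _⟩ := arcH_int hG hC hhom hrk ha
      have hva := hval a ha
      have hvc := vh_chainElt hG hC hhom hrk ha hcVh hcint
      rw [hfix c hc]
      refine interval_ord hC harc hva.2 hvc.1 ?_
      rw [hva.1, hrk _ hcVh]
      exact (hr.2 a ha).2.2.1 c hac hcVh
    · -- a ∈ Vh, c ∈ Vmh
      have haVh : a ∈ Vh G := not_vmh_in_V haV ha
      have good := good_exists hG hc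
      have haint : a ∈ trInterval G (bz G c) (uz G c) :=
        (good.2.2 c (compt_self hc)).2.1 a hac
      obtain ⟨harc, hne, hrkb, hrku, _⟩ := arcH_int hG hC hhom hrk hc
      have hvc := hval c hc
      have hva := vh_chainElt hG hC hhom hrk hc haVh haint
      rw [hfix a ha]
      refine interval_ord hC harc hva.1 hvc.2 ?_
      rw [hvc.1, hrk _ haVh]
      exact (hr.2 c hc).2.1 a hac haVh
    · -- both in Vh
      rw [hfix a ha, hfix c hc]
      exact hom_arc hhom hac.1
  have hmaps : ∀ v ∈ G.V, ξ' v ∈ H.V := by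
    intro v hv
    by_cases h : v ∈ Vmh G
    · exact interval_subset_V (hval v h).2
    · rw [hfix v h]
      exact hom_mem_V hhom hv
  refine ⟨⟨hmaps, ?_, ?_⟩, hfix, hval⟩
  · -- all arcs
    rintro ⟨v, w⟩ hvw
    by_cases hne : v = w
    · subst hne
      exact hC.1.1 _ (hmaps v (G.A_sub _ hvw).1)
    · exact transGen_arcH hC.1 hcore (span hTaG hvw hne)
  · -- normalization
    intro v hv
    have hnm : v ∉ Vmh G := fun h => hv (vmh_sub_V h)
    rw [hfix v hnm]
    exact hhom.2.2 v hv

end Surgery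
end StrictCount
namespace StrictCount
open Dgraph

section Surgery2

variable {n : ℕ} {G H : Dgraph}

lemma surg_strict (hG : MemTaApprox n G) (hC : MemC n H) {ξ r : ℕ → ℕ}
    (hhom : ξ ∈ Hom G H) (hrk : ∀ v ∈ Vh G, rho H (ξ v) = rho G v)
    (hs : r ∈ Sset G) : surg G H ξ r ∈ SHom G H := by
  classical
  have hTaG := hG.1
  have hTaH := poset_memTa hC.1
  obtain ⟨hhom', hfix, hval⟩ := surg_main hG hC hhom hrk hs.1
  set ξ' := surg G H ξ r with hxi
  have hrhoOf : ∀ x, x ∈ G.V → x ∈ Vmh G → rho H (ξ' x) = r x := fun x _ hx => (hval x hx).1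
  have hrhoOf' : ∀ x, x ∈ Vh G → rho H (ξ' x) = rho G x := by
    intro x hx
    rw [hfix x (vh_not_vmh hx)]
    exact hrk x hx
  have hcore : ∀ a c, RdArc G a c → (ξ' a, ξ' c) ∈ H.A := by
    intro a c hac
    by_cases hne : a = c
    · exact absurd hne (rdArc_ne hac)
    · exact transGen_arcH hC.1
        (fun a' c' h => (hhom'.2.1 (a', c') h.1 : _)) (Relation.TransGen.single hac)
  have hscore : ∀ a c, RdArc G a c → ξ' a ≠ ξ' c := by
    intro a c hac heq
    have haV : a ∈ G.V := (G.A_sub _ hac.1).1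
    have hcV : c ∈ G.V := (G.A_sub _ hac.1).2
    by_cases ha : a ∈ Vmh G <;> by_cases hc : c ∈ Vmh G
    · have h1 := hrhoOf a haV ha
      have h2 := hrhoOf c hcV hc
      rw [heq] at h1
      exact (hs.2 a ha).2.2 c hac hc (by omega)
    · have hcVh : c ∈ Vh G := not_vmh_in_V hcV hc
      have h1 := hrhoOf a haV ha
      have h2 := hrhoOf' c hcVh
      rw [heq] at h1
      exact (hs.2 a ha).2.1 c hac hcVh (by omega)
    · have haVh : a ∈ Vh G := not_vmh_in_V haV ha
      have h1 := hrhoOf' a haVh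
      have h2 := hrhoOf c hcV hc
      rw [heq] at h1
      exact (hs.2 c hc).1 a hac haVh (by omega)
    · have haVh : a ∈ Vh G := not_vmh_in_V haV ha
      have hcVh : c ∈ Vh G := not_vmh_in_V hcV hc
      have h1 := hrhoOf' a haVh
      have h2 := hrhoOf' c hcVh
      have := rho_arc_lt hTaG hac.1 (rdArc_ne hac)
      rw [heq] at h1
      omega
  refine ⟨hhom', ?_⟩
  rintro ⟨v, w⟩ hvw
  obtain ⟨harc, hne⟩ := Finset.mem_filter.1 hvw
  simp only at harc hne ⊢
  intro heq
  obtain ⟨b, hab, hbc⟩ := Relation.TransGen.tail'_iff.mp (span hTaG harc hne)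
  rcases Relation.reflTransGen_iff_eq_or_transGen.mp hab with rfl | htg
  · exact hscore _ _ hbc heq
  · have e1 : (ξ' v, ξ' b) ∈ H.A := transGen_arcH hC.1 hcore htg
    have e2 : (ξ' b, ξ' w) ∈ H.A := hcore _ _ hbc
    rw [heq] at e1
    have hbw : ξ' b = ξ' w := hC.1.2.1 _ _ e2 e1
    exact hscore _ _ hbc hbw

lemma rk_mem (hG : MemTaApprox n G) (hC : MemC n H) {ξ : ℕ → ℕ}
    (hhom : ξ ∈ Hom G H) (hrk : ∀ v ∈ Vh G, rho H (ξ v) = rho G v) :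
    rk G H ξ ∈ Rset G := by
  classical
  have hTaH := poset_memTa hC.1
  constructor
  · intro z hz
    simp [rk, if_neg hz]
  · intro z hz
    obtain ⟨harc, hne, hrkb, hrku, hmem⟩ := arcH_int hG hC hhom hrk hz
    have hz' : rk G H ξ z = rho H (ξ z) := by simp [rk, if_pos hz]
    have hbd := interval_rho_bounds hTaH hmem
    refine ⟨⟨by omega, by omega⟩, ?_, ?_, ?_⟩
    · intro v hrd hvVh
      have := rho_mono hTaH (hom_arc hhom hrd.1)
      have e := hrk _ hvVh
      omega
    · intro v hrd hvVh
      have := rho_mono hTaH (hom_arc hhom hrd.1)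
      have e := hrk _ hvVh
      omega
    · intro v hrd hvVmh
      have := rho_mono hTaH (hom_arc hhom hrd.1)
      have hv' : rk G H ξ v = rho H (ξ v) := by simp [rk, if_pos hvVmh]
      omega

lemma rk_mem_strict (hG : MemTaApprox n G) (hC : MemC n H) {ξ : ℕ → ℕ}
    (hshom : ξ ∈ SHom G H) (hrk : ∀ v ∈ Vh G, rho H (ξ v) = rho G v) :
    rk G H ξ ∈ Sset G := by
  classical
  have hTaH := poset_memTa hC.1
  refine ⟨rk_mem hG hC hshom.1 hrk, ?_⟩
  intro z hz
  have hz' : rk G H ξ z = rho H (ξ z) := by simp [rk, if_pos hz]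
  refine ⟨?_, ?_, ?_⟩
  · intro v hrd hvVh
    have := rho_arc_lt hTaH (hom_arc hshom.1 hrd.1)
      (shom_strict hshom hrd.1 (rdArc_ne hrd))
    have e := hrk _ hvVh
    omega
  · intro v hrd hvVh
    have := rho_arc_lt hTaH (hom_arc hshom.1 hrd.1)
      (shom_strict hshom hrd.1 (rdArc_ne hrd))
    have e := hrk _ hvVh
    omega
  · intro v hrd hvVmh
    have := rho_arc_lt hTaH (hom_arc hshom.1 hrd.1)
      (shom_strict hshom hrd.1 (rdArc_ne hrd))
    have hv' : rk G H ξ v = rho H (ξ v) := by simp [rk, if_pos hvVmh]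
    omega

lemma surg_invol (hG : MemTaApprox n G) (hC : MemC n H) {ξ r : ℕ → ℕ}
    (hhom : ξ ∈ Hom G H) (hrk : ∀ v ∈ Vh G, rho H (ξ v) = rho G v)
    (hr : r ∈ Rset G) :
    rk G H (surg G H ξ r) = r ∧ surg G H (surg G H ξ r) (rk G H ξ) = ξ := by
  classical
  obtain ⟨hhom', hfix, hval⟩ := surg_main hG hC hhom hrk hr
  constructor
  · funext z
    by_cases hz : z ∈ Vmh G
    · have : rk G H (surg G H ξ r) z = rho H (surg G H ξ r z) := by simp [rk, if_pos hz]
      rw [this, (hval z hz).1]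
    · have : rk G H (surg G H ξ r) z = 0 := by simp [rk, if_neg hz]
      rw [this, (hr.1 z hz)]
  · funext v
    by_cases hv : v ∈ Vmh G
    · obtain ⟨harc, hne, hrkb, hrku, hmem⟩ := arcH_int hG hC hhom hrk hv
      have hbnot : bz G v ∉ Vmh G := vh_not_vmh (bu_facts hG hv).1
      have hunot : uz G v ∉ Vmh G := vh_not_vmh (bu_facts hG hv).2.1
      have e1 : surg G H (surg G H ξ r) (rk G H ξ) v =
          chainElt H (surg G H ξ r (bz G v)) (surg G H ξ r (uz G v)) (rk G H ξ v) := by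
        simp [surg, if_pos hv]
      rw [e1, hfix _ hbnot, hfix _ hunot]
      have e2 : rk G H ξ v = rho H (ξ v) := by simp [rk, if_pos hv]
      rw [e2]
      exact (chainElt_unique hC harc hne hmem rfl).symm
    · have : surg G H (surg G H ξ r) (rk G H ξ) v = surg G H ξ r v := by
        simp [surg, if_neg hv]
      rw [this, hfix _ hv]

end Surgery2
end StrictCount
namespace StrictCount
open Dgraph

lemma funfin (S : Finset ℕ) (M : ℕ) :
    {f : ℕ → ℕ | (∀ v, v ∉ S → f v = 0) ∧ ∀ v, f v ≤ M}.Finite := by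
  classical
  have hinj : Set.InjOn
      (fun (f : ℕ → ℕ) => (fun v : {x // x ∈ S} => (⟨min (f v) M, by omega⟩ : Fin (M + 1))))
      {f : ℕ → ℕ | (∀ v, v ∉ S → f v = 0) ∧ ∀ v, f v ≤ M} := by
    intro f hf g hg he
    funext v
    by_cases hv : v ∈ S
    · have := congrFun he ⟨v, hv⟩
      simp only [Fin.mk.injEq] at this
      have h1 : min (f v) M = f v := by have := hf.2 v; omega
      have h2 : min (g v) M = g v := by have := hg.2 v; omega
      rw [h1, h2] at this
      exact this
    · rw [hf.1 v hv, hg.1 v hv]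
  exact Set.Finite.of_finite_image (Set.toFinite _) hinj

lemma hom_finite (G H : Dgraph) : (Hom G H).Finite := by
  apply Set.Finite.subset (funfin G.V (H.V.sup id))
  rintro f ⟨h1, _h2, h3⟩
  refine ⟨h3, fun v => ?_⟩
  by_cases hv : v ∈ G.V
  · exact Finset.le_sup (f := id) (h1 v hv)
  · rw [h3 v hv]; omega

lemma shom_finite (G H : Dgraph) : (SHom G H).Finite :=
  (hom_finite G H).subset (fun _ h => h.1)

lemma jset_finite (G H : Dgraph) (L : Set Dgraph) (σ : ℕ → ℕ) :
    (JSet G H H L σ).Finite :=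
  (hom_finite G H).subset (fun _ h => h.1)

lemma rset_finite {n : ℕ} {G : Dgraph} (hG : MemTaApprox n G) : (Rset G).Finite := by
  apply Set.Finite.subset (funfin G.V G.height)
  rintro r ⟨hnorm, hcl⟩
  constructor
  · intro v hv
    exact hnorm v (fun hvm => hv (vmh_sub_V hvm))
  · intro v
    by_cases hv : v ∈ Vmh G
    · have h1 := (hcl v hv).1.2
      have h2 := rho_le_height (vh_sub_V (bu_facts hG hv).2.1)
      omega
    · rw [hnorm v hv]
      exact Nat.zero_le _

lemma sset_finite {n : ℕ} {G : Dgraph} (hG : MemTaApprox n G) : (Sset G).Finite :=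
  (rset_finite hG).subset sset_sub_rset

open scoped Classical in
lemma r0_mem {n : ℕ} {G : Dgraph} (hG : MemTaApprox n G) :
    (fun z => if z ∈ Vmh G then rho G z else 0) ∈ Sset G := by
  classical
  have hTaG := hG.1
  refine ⟨⟨fun z hz => by simp [if_neg hz], fun z hz => ?_⟩, fun z hz => ?_⟩
  · obtain ⟨hb, hu, htr, h1, h2⟩ := bu_facts hG hz
    simp only [if_pos hz]
    refine ⟨⟨by omega, by omega⟩, ?_, ?_, ?_⟩
    · intro v hrd _
      exact le_of_lt (rho_arc_lt hTaG hrd.1 (rdArc_ne hrd))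
    · intro v hrd _
      exact le_of_lt (rho_arc_lt hTaG hrd.1 (rdArc_ne hrd))
    · intro v hrd hv
      simp only [if_pos hv]
      exact le_of_lt (rho_arc_lt hTaG hrd.1 (rdArc_ne hrd))
  · simp only [if_pos hz]
    refine ⟨?_, ?_, ?_⟩
    · intro v hrd _
      exact Nat.ne_of_lt (rho_arc_lt hTaG hrd.1 (rdArc_ne hrd))
    · intro v hrd _
      exact Nat.ne_of_lt (rho_arc_lt hTaG hrd.1 (rdArc_ne hrd))
    · intro v hrd hv
      simp only [if_pos hv]
      exact Nat.ne_of_lt (rho_arc_lt hTaG hrd.1 (rdArc_ne hrd))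

lemma ncard_prod {α β : Type*} {s : Set α} {t : Set β} (hs : s.Finite) (ht : t.Finite) :
    (s ×ˢ t).ncard = s.ncard * t.ncard := by
  rw [Set.ncard_eq_toFinset_card _ (hs.prod ht), ← Set.Finite.toFinset_prod hs ht,
    Finset.card_product, ← Set.ncard_eq_toFinset_card _ hs, ← Set.ncard_eq_toFinset_card _ ht]

end StrictCount
open StrictCount

theorem stmt_4 (n : ℕ) (G : Dgraph) (hG : MemTaApprox n G) :
    ∃ φ : ℝ, 0 < φ ∧ φ ≤ 1 ∧
      ∀ H : Dgraph, MemC n H → ∀ σ ∈ SHom G H,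
        ((SHom G H).ncard : ℝ) = φ * ((JSet G H H (LSet G) σ).ncard : ℝ) := by
  classical
  have hTaG := hG.1
  have hh := hG.2.1
  have hRfin := rset_finite hG
  have hSfin := sset_finite hG
  have hS0 : (Sset G).Nonempty := ⟨_, r0_mem hG⟩
  have hSpos : 0 < (Sset G).ncard := (Set.ncard_pos hSfin).2 hS0
  have hRle : (Sset G).ncard ≤ (Rset G).ncard := Set.ncard_le_ncard sset_sub_rset hRfin
  refine ⟨((Sset G).ncard : ℝ) / ((Rset G).ncard : ℝ), ?_, ?_, ?_⟩
  · apply div_pos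
    · exact_mod_cast hSpos
    · exact_mod_cast (by omega : 0 < (Rset G).ncard)
  · rw [div_le_one (by exact_mod_cast (by omega : 0 < (Rset G).ncard))]
    exact_mod_cast hRle
  · intro H hC σ hσ
    have hrkσ : ∀ f ∈ SHom G H, ∀ v ∈ Vh G, rho H (f v) = rho G v :=
      fun f hf v hv => shom_rank hTaG hh hC hf hv
    set F : (ℕ → ℕ) × (ℕ → ℕ) → (ℕ → ℕ) × (ℕ → ℕ) :=
      fun p => (surg G H p.1 p.2, rk G H p.1) with hF
    have hbij : Set.BijOn F ((SHom G H) ×ˢ (Rset G))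
        ((JSet G H H (LSet G) σ) ×ˢ (Sset G)) := by
      refine ⟨?_, ?_, ?_⟩
      · rintro ⟨f, r⟩ ⟨hf, hr⟩
        have hrk := hrkσ f hf
        obtain ⟨hhom', hfix, hval⟩ := surg_main hG hC hf.1 hrk hr
        refine ⟨?_, ?_⟩
        · show surg G H f r ∈ JSet G H H (LSet G) σ
          rw [jchar hTaG hh hC hσ]
          refine ⟨hhom', fun v hv => ?_⟩
          rw [hfix v (vh_not_vmh hv)]
          exact hrk v hv
        · exact rk_mem_strict hG hC hf hrk
      · rintro ⟨f₁, r₁⟩ ⟨hf₁, hr₁⟩ ⟨f₂, r₂⟩ ⟨hf₂, hr₂⟩ he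
        simp only at hf₁ hr₁ hf₂ hr₂
        have h1 := surg_invol hG hC hf₁.1 (hrkσ f₁ hf₁) hr₁
        have h2 := surg_invol hG hC hf₂.1 (hrkσ f₂ hf₂) hr₂
        have he1 : surg G H f₁ r₁ = surg G H f₂ r₂ := congrArg Prod.fst he
        have he2 : rk G H f₁ = rk G H f₂ := congrArg Prod.snd he
        have hfe : f₁ = f₂ := by rw [← h1.2, ← h2.2, he1, he2]
        have hre : r₁ = r₂ := by rw [← h1.1, ← h2.1, he1]
        rw [Prod.ext_iff]
        exact ⟨hfe, hre⟩
      · rintro ⟨g, t⟩ ⟨hg, ht⟩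
        have hgr := (jchar hTaG hh hC hσ).1 hg
        have hstricts := surg_strict hG hC hgr.1 hgr.2 ht
        have hrkmem := rk_mem hG hC hgr.1 hgr.2
        have hinv := surg_invol hG hC hgr.1 hgr.2 ht.1
        refine ⟨(surg G H g t, rk G H g), ⟨hstricts, hrkmem⟩, ?_⟩
        show (surg G H (surg G H g t) (rk G H g), rk G H (surg G H g t)) = (g, t)
        rw [Prod.ext_iff]
        exact ⟨hinv.2, hinv.1⟩
    have hcount : (SHom G H).ncard * (Rset G).ncard
        = (JSet G H H (LSet G) σ).ncard * (Sset G).ncard := by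
      have himg := Set.ncard_image_of_injOn hbij.injOn
      rw [hbij.image_eq] at himg
      rw [← ncard_prod (shom_finite G H) hRfin, ← ncard_prod (jset_finite G H _ σ) hSfin,
        himg]
    have hRne : ((Rset G).ncard : ℝ) ≠ 0 :=
      Nat.cast_ne_zero.2 (by omega)
    rw [div_mul_eq_mul_div, eq_div_iff hRne]
    exact_mod_cast hcount.trans (Nat.mul_comm _ _)
end
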